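/- arXiv:0908.3750 — 6 statements merged into one kernel-verified Lean document; each statement's English description precedes it below -/
import Mathlib

section
/- Let θ < 0 with α = -1/θ > 0 and define ψ_θ(x) = (1+θx)₊^{-1/θ} on [0,∞). For integer d ≥ 2, ψ_θ is d-monotone on [0,∞) if and only if α ≥ d-1, i.e., if and only if θ ≥ -1/(d-1). -/
open Set MeasureTheory ProbabilityTheory Filter

noncomputable section

/-- `f` is `d`-monotone on `[0,∞)`: continuous on `[0,∞)`, derivatives up to order `d-2`
exist on `(0,∞)` with `(-1)^k f^(k) ≥ 0`, and `(-1)^(d-2) f^(d-2)` is nonincreasing and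
convex on `(0,∞)`. -/
def DMonotoneOn (d : ℕ) (f : ℝ → ℝ) : Prop :=
  ContinuousOn f (Set.Ici 0) ∧
  (∀ k, k + 2 < d → ∀ x ∈ Set.Ioi (0:ℝ), DifferentiableAt ℝ (iteratedDeriv k f) x) ∧
  (∀ k, k + 2 ≤ d → ∀ x ∈ Set.Ioi (0:ℝ), 0 ≤ (-1:ℝ)^k * iteratedDeriv k f x) ∧
  AntitoneOn (fun x => (-1:ℝ)^(d-2) * iteratedDeriv (d-2) f x) (Set.Ioi 0) ∧
  ConvexOn ℝ (Set.Ioi 0) (fun x => (-1:ℝ)^(d-2) * iteratedDeriv (d-2) f x)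

namespace Stmt3Aux

open Set Filter Finset Real Topology

variable {θ : ℝ}

lemma iteratedDeriv_zero_fun (k : ℕ) : iteratedDeriv k (fun _ : ℝ => (0:ℝ)) = fun _ => 0 := by
  induction k with
  | zero => simp [iteratedDeriv_zero]
  | succ n ih => rw [iteratedDeriv_succ, ih]; simp

lemma mem_nhds_pos (hx : 0 < 1 + θ * x) : {y : ℝ | 0 < 1 + θ * y} ∈ 𝓝 x :=
  (isOpen_lt continuous_const (continuous_const.add (continuous_const.mul continuous_id))).mem_nhds hx

lemma mem_nhds_neg (hx : 1 + θ * x < 0) : {y : ℝ | 1 + θ * y < 0} ∈ 𝓝 x :=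
  (isOpen_lt (continuous_const.add (continuous_const.mul continuous_id)) continuous_const).mem_nhds hx

lemma hasDerivAt_affine (x : ℝ) : HasDerivAt (fun y : ℝ => 1 + θ * y) θ x := by
  simpa using ((hasDerivAt_id x).const_mul θ).const_add 1

lemma hasDerivAt_maxpow {β : ℝ} (hβ : 1 < β) (x : ℝ) :
    HasDerivAt (fun y : ℝ => max (1 + θ * y) 0 ^ β)
      (β * θ * max (1 + θ * x) 0 ^ (β - 1)) x := by
  rcases lt_trichotomy (1 + θ * x) 0 with h | h | h
  · have hev : (fun y : ℝ => max (1 + θ * y) 0 ^ β) =ᶠ[𝓝 x] fun _ => (0:ℝ) :=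
      eventually_of_mem (mem_nhds_neg h) fun y hy => by
        dsimp only
        rw [max_eq_right (le_of_lt hy), Real.zero_rpow (by positivity)]
    have h0 : HasDerivAt (fun _ : ℝ => (0:ℝ)) 0 x := hasDerivAt_const x 0
    have := h0.congr_of_eventuallyEq hev
    refine this.congr_deriv ?_
    rw [max_eq_right h.le, Real.zero_rpow (by intro hc; linarith [hc])]
    ring
  · -- the kink point
    have hfx : max (1 + θ * x) 0 ^ β = 0 := by
      rw [h, max_self, Real.zero_rpow (by positivity)]
    have hval : β * θ * max (1 + θ * x) 0 ^ (β - 1) = 0 := by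
      rw [h, max_self, Real.zero_rpow (by intro hc; linarith [hc])]; ring
    rw [hasDerivAt_iff_isLittleO, hval, hfx]
    simp only [smul_zero, sub_zero]
    rw [Asymptotics.isLittleO_iff]
    intro c hc
    have t1 : Tendsto (fun y : ℝ => |y - x|) (𝓝 x) (𝓝 0) := by
      have hcont : Continuous (fun y : ℝ => |y - x|) := (continuous_id.sub continuous_const).abs
      simpa using hcont.tendsto x
    have t2 : Tendsto (fun t : ℝ => t ^ (β - 1)) (𝓝 0) (𝓝 0) := by
      have hcont := Real.continuousAt_rpow_const 0 (β - 1) (Or.inr (by linarith))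
      have h0 : (0:ℝ) ^ (β - 1) = 0 := Real.zero_rpow (by intro hc'; linarith [hc'])
      simpa [ContinuousAt, h0] using hcont
    have key : Tendsto (fun y : ℝ => |θ| ^ β * |y - x| ^ (β - 1)) (𝓝 x) (𝓝 0) := by
      have := (t2.comp t1).const_mul (|θ| ^ β)
      simpa using this
    filter_upwards [key.eventually_lt_const hc] with y hy
    rcases eq_or_ne y x with rfl | hyx
    · rw [hfx]; simp
    · have hbase : 1 + θ * y = θ * (y - x) := by linarith [mul_sub θ y x, h]
      have h1 : max (1 + θ * y) 0 ≤ |θ| * |y - x| := by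
        rw [hbase]
        refine max_le ?_ (by positivity)
        calc θ * (y - x) ≤ |θ * (y - x)| := le_abs_self _
          _ = |θ| * |y - x| := abs_mul _ _
      have h2 : max (1 + θ * y) 0 ^ β ≤ (|θ| * |y - x|) ^ β :=
        Real.rpow_le_rpow (le_max_right _ _) h1 (by linarith)
      have hyx' : (0:ℝ) < |y - x| := abs_pos.2 (sub_ne_zero.2 hyx)
      have h3 : (|θ| * |y - x|) ^ β = |θ| ^ β * (|y - x| ^ (β - 1) * |y - x|) := by
        rw [Real.mul_rpow (abs_nonneg _) (abs_nonneg _)]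
        congr 1
        rw [← Real.rpow_add_one (ne_of_gt hyx')]
        ring_nf
      have h4 : ‖max (1 + θ * y) 0 ^ β‖ = max (1 + θ * y) 0 ^ β := by
        rw [Real.norm_eq_abs, abs_of_nonneg (Real.rpow_nonneg (le_max_right _ _) _)]
      rw [h4, Real.norm_eq_abs]
      calc max (1 + θ * y) 0 ^ β ≤ |θ| ^ β * (|y - x| ^ (β - 1) * |y - x|) := by
            rw [← h3]; exact h2
        _ = (|θ| ^ β * |y - x| ^ (β - 1)) * |y - x| := by ring
        _ ≤ c * |y - x| := by
            apply mul_le_mul_of_nonneg_right (le_of_lt hy) (abs_nonneg _)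
  · have hev : (fun y : ℝ => max (1 + θ * y) 0 ^ β) =ᶠ[𝓝 x]
        fun y => (1 + θ * y) ^ β :=
      eventually_of_mem (mem_nhds_pos h) fun y hy => by dsimp only; rw [max_eq_left (le_of_lt hy)]
    have h2 : HasDerivAt (fun t : ℝ => t ^ β) (β * (1 + θ * x) ^ (β - 1)) (1 + θ * x) :=
      Real.hasDerivAt_rpow_const (Or.inl (ne_of_gt h))
    have h3 : HasDerivAt (fun y : ℝ => (1 + θ * y) ^ β) (β * (1 + θ * x) ^ (β - 1) * θ) x :=
      by exact h2.comp x (hasDerivAt_affine x)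
    have h4 := h3.congr_of_eventuallyEq hev
    refine h4.congr_deriv ?_
    rw [max_eq_left h.le]
    ring


lemma iteratedDeriv_pos_side (p : ℝ) (k : ℕ) :
    ∀ x : ℝ, 0 < 1 + θ * x →
      iteratedDeriv k (fun y : ℝ => max (1 + θ * y) 0 ^ p) x =
        (∏ i ∈ Finset.range k, (p - i)) * θ ^ k * (1 + θ * x) ^ (p - k) := by
  induction k with
  | zero =>
    intro x hx
    simp [iteratedDeriv_zero, max_eq_left hx.le]
  | succ n ih =>
    intro x hx
    have hev : iteratedDeriv n (fun y : ℝ => max (1 + θ * y) 0 ^ p) =ᶠ[𝓝 x]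
        fun y => (∏ i ∈ Finset.range n, (p - i)) * θ ^ n * (1 + θ * y) ^ (p - n) :=
      eventually_of_mem (mem_nhds_pos hx) fun y hy => ih y hy
    rw [iteratedDeriv_succ, hev.deriv_eq]
    have h2 : HasDerivAt (fun t : ℝ => t ^ (p - (n:ℝ)))
        ((p - n) * (1 + θ * x) ^ (p - (n:ℝ) - 1)) (1 + θ * x) :=
      Real.hasDerivAt_rpow_const (Or.inl (ne_of_gt hx))
    have h3 : HasDerivAt (fun y : ℝ => (1 + θ * y) ^ (p - (n:ℝ)))
        ((p - n) * (1 + θ * x) ^ (p - (n:ℝ) - 1) * θ) x := by exact h2.comp x (hasDerivAt_affine x)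
    have h4 := h3.const_mul ((∏ i ∈ Finset.range n, (p - i)) * θ ^ n)
    rw [h4.deriv, Finset.prod_range_succ]
    have hexp : (p - ((n:ℝ) + 1)) = p - (n:ℝ) - 1 := by ring
    rw [Nat.cast_succ, hexp, pow_succ]
    ring

lemma iteratedDeriv_neg_side {p : ℝ} (hp : p ≠ 0) (k : ℕ) :
    ∀ x : ℝ, 1 + θ * x < 0 →
      iteratedDeriv k (fun y : ℝ => max (1 + θ * y) 0 ^ p) x = 0 := by
  intro x hx
  have hev : (fun y : ℝ => max (1 + θ * y) 0 ^ p) =ᶠ[𝓝 x] fun _ => (0:ℝ) :=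
    eventually_of_mem (mem_nhds_neg hx) fun y hy => by
      dsimp only
      rw [max_eq_right (le_of_lt hy), Real.zero_rpow hp]
  rw [hev.iteratedDeriv_eq k, iteratedDeriv_zero_fun]

lemma iteratedDeriv_global {p : ℝ} {d : ℕ} (hd : 2 ≤ d) (hp : (d:ℝ) - 1 ≤ p) :
    ∀ k, k ≤ d - 2 → ∀ x : ℝ,
      iteratedDeriv k (fun y : ℝ => max (1 + θ * y) 0 ^ p) x =
        (∏ i ∈ Finset.range k, (p - i)) * θ ^ k * max (1 + θ * x) 0 ^ (p - k) := by
  intro k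
  induction k with
  | zero => intro _ x; simp [iteratedDeriv_zero]
  | succ n ih =>
    intro hn x
    have hn' : n ≤ d - 2 := by omega
    have hcast : (n:ℝ) + 3 ≤ (d:ℝ) := by exact_mod_cast Nat.cast_le.2 (show n + 3 ≤ d by omega)
    have hβ : 1 < p - (n:ℝ) := by linarith
    have hfun : iteratedDeriv n (fun y : ℝ => max (1 + θ * y) 0 ^ p) =
        fun y => (∏ i ∈ Finset.range n, (p - i)) * θ ^ n * max (1 + θ * y) 0 ^ (p - n) :=
      funext fun y => ih hn' y
    rw [iteratedDeriv_succ, hfun]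
    have h1 : HasDerivAt (fun y : ℝ => (∏ i ∈ Finset.range n, (p - i)) * θ ^ n *
        max (1 + θ * y) 0 ^ (p - (n:ℝ)))
        ((∏ i ∈ Finset.range n, (p - i)) * θ ^ n *
          ((p - n) * θ * max (1 + θ * x) 0 ^ (p - (n:ℝ) - 1))) x :=
      (hasDerivAt_maxpow hβ x).const_mul _
    rw [h1.deriv, Finset.prod_range_succ]
    have hexp : (p - ((n:ℝ) + 1)) = p - (n:ℝ) - 1 := by ring
    rw [Nat.cast_succ, hexp, pow_succ]
    ring


lemma backward {p : ℝ} {d : ℕ} (hθ : θ < 0) (hd : 2 ≤ d) (hp : (d:ℝ) - 1 ≤ p) :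
    DMonotoneOn d (fun x : ℝ => max (1 + θ * x) 0 ^ p) := by
  have hd2 : ((d - 2 : ℕ) : ℝ) = (d:ℝ) - 2 := by
    rw [Nat.cast_sub hd]; norm_num
  have hdR : (2:ℝ) ≤ (d:ℝ) := by exact_mod_cast hd
  have hp0 : 0 < p := by linarith
  have hprod : ∀ k, k ≤ d - 2 → 0 ≤ ∏ i ∈ Finset.range k, (p - (i:ℝ)) := by
    intro k hk
    refine Finset.prod_nonneg fun i hi => ?_
    have hi' : i + 3 ≤ d := by
      have := Finset.mem_range.1 hi; omega
    have : (i:ℝ) + 3 ≤ (d:ℝ) := by exact_mod_cast hi'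
    linarith
  refine ⟨?_, ?_, ?_, ?_, ?_⟩
  · refine Continuous.continuousOn (continuous_iff_continuousAt.2 fun x => ?_)
    exact (Real.continuousAt_rpow_const _ _ (Or.inr hp0.le)).comp
      ((continuous_const.add (continuous_const.mul continuous_id)).max continuous_const).continuousAt
  · intro k hk x _
    have hkd : k ≤ d - 2 := by omega
    have hfun := funext (iteratedDeriv_global (θ := θ) hd hp k hkd)
    rw [hfun]
    have hc : (k:ℝ) + 3 ≤ (d:ℝ) := by exact_mod_cast (show k + 3 ≤ d by omega)
    have hβ : 1 < p - (k:ℝ) := by linarith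
    exact ((hasDerivAt_maxpow hβ x).const_mul _).differentiableAt
  · intro k hk x _
    have hkd : k ≤ d - 2 := by omega
    rw [iteratedDeriv_global (θ := θ) hd hp k hkd x]
    have hg : (-1:ℝ)^k * ((∏ i ∈ Finset.range k, (p - (i:ℝ))) * θ ^ k *
        max (1 + θ * x) 0 ^ (p - (k:ℝ))) =
        ((∏ i ∈ Finset.range k, (p - (i:ℝ))) * (-θ) ^ k) *
          max (1 + θ * x) 0 ^ (p - (k:ℝ)) := by
      rw [neg_pow]; ring
    rw [hg]
    exact mul_nonneg (mul_nonneg (hprod k hkd) (pow_nonneg (by linarith) k))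
      (Real.rpow_nonneg (le_max_right _ _) _)
  · have hfun : (fun x => (-1:ℝ)^(d-2) * iteratedDeriv (d-2)
        (fun y : ℝ => max (1 + θ * y) 0 ^ p) x) =
        fun x => ((∏ i ∈ Finset.range (d-2), (p - (i:ℝ))) * (-θ) ^ (d-2)) *
          max (1 + θ * x) 0 ^ (p - ((d-2:ℕ):ℝ)) := by
      funext x
      rw [iteratedDeriv_global (θ := θ) hd hp (d-2) le_rfl x, neg_pow]
      ring
    rw [hfun]
    intro x _ y _ hxy
    dsimp only
    have hK : 0 ≤ (∏ i ∈ Finset.range (d-2), (p - (i:ℝ))) * (-θ) ^ (d-2) :=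
      mul_nonneg (hprod _ le_rfl) (pow_nonneg (by linarith) _)
    refine mul_le_mul_of_nonneg_left ?_ hK
    refine Real.rpow_le_rpow (le_max_right _ _) (max_le_max (by nlinarith) le_rfl) ?_
    rw [hd2]; linarith
  · have hfun : (fun x => (-1:ℝ)^(d-2) * iteratedDeriv (d-2)
        (fun y : ℝ => max (1 + θ * y) 0 ^ p) x) =
        fun x => ((∏ i ∈ Finset.range (d-2), (p - (i:ℝ))) * (-θ) ^ (d-2)) *
          max (1 + θ * x) 0 ^ (p - ((d-2:ℕ):ℝ)) := by
      funext x
      rw [iteratedDeriv_global (θ := θ) hd hp (d-2) le_rfl x, neg_pow]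
      ring
    rw [hfun]
    set K := (∏ i ∈ Finset.range (d-2), (p - (i:ℝ))) * (-θ) ^ (d-2) with hKdef
    have hK : 0 ≤ K :=
      mul_nonneg (hprod _ le_rfl) (pow_nonneg (by linarith) _)
    set e := p - ((d-2:ℕ):ℝ) with hedef
    have he1 : 1 ≤ e := by rw [hedef, hd2]; linarith
    have he0 : 0 ≤ e := by linarith
    refine ⟨convex_Ioi 0, ?_⟩
    intro x _ y _ a b ha hb hab
    dsimp only [smul_eq_mul]
    set mx := max (1 + θ * x) 0 with hmx
    set my := max (1 + θ * y) 0 with hmy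
    have hmx0 : 0 ≤ mx := le_max_right _ _
    have hmy0 : 0 ≤ my := le_max_right _ _
    have s1 : max (1 + θ * (a * x + b * y)) 0 ≤ a * mx + b * my := by
      refine max_le ?_ (by positivity)
      have h1 : 1 + θ * (a * x + b * y) = a * (1 + θ * x) + b * (1 + θ * y) := by
        have : a + b = 1 := hab
        nlinarith [this]
      rw [h1]
      have := le_max_left (1 + θ * x) 0
      have := le_max_left (1 + θ * y) 0
      nlinarith
    have s2 : max (1 + θ * (a * x + b * y)) 0 ^ e ≤ (a * mx + b * my) ^ e :=
      Real.rpow_le_rpow (le_max_right _ _) s1 he0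
    have s3 : (a * mx + b * my) ^ e ≤ a * mx ^ e + b * my ^ e := by
      have := (convexOn_rpow he1).2 (Set.mem_Ici.2 hmx0) (Set.mem_Ici.2 hmy0) ha hb hab
      simpa [smul_eq_mul] using this
    calc K * max (1 + θ * (a * x + b * y)) 0 ^ e ≤ K * (a * mx ^ e + b * my ^ e) :=
          mul_le_mul_of_nonneg_left (s2.trans s3) hK
      _ = a * (K * mx ^ e) + b * (K * my ^ e) := by ring


lemma forward {p : ℝ} {d : ℕ} (hθ : θ < 0) (hd : 2 ≤ d) (hp0 : 0 < p)
    (h : DMonotoneOn d (fun x : ℝ => max (1 + θ * x) 0 ^ p)) :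
    (d:ℝ) - 1 ≤ p := by
  by_contra hlt
  push_neg at hlt
  obtain ⟨hcont, hdiff, hsign, hanti, hconv⟩ := h
  have hθ0 : θ ≠ 0 := ne_of_lt hθ
  set x₀ : ℝ := -1/θ with hx₀def
  have hx₀ : 0 < x₀ := by
    rw [hx₀def, neg_div, ← div_neg]
    exact div_pos one_pos (neg_pos.2 hθ)
  have hθx₀ : θ * x₀ = -1 := by rw [hx₀def]; field_simp
  have hpos_of : ∀ y, y < x₀ → 0 < 1 + θ * y := by
    intro y hy
    have := mul_lt_mul_of_neg_left hy hθ
    linarith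
  have hneg_of : ∀ y, x₀ < y → 1 + θ * y < 0 := by
    intro y hy
    have := mul_lt_mul_of_neg_left hy hθ
    linarith
  set m := d - 2 with hmdef
  have hdm : d = m + 2 := by omega
  have hcast : (d:ℝ) - 1 = (m:ℝ) + 1 := by rw [hdm]; push_cast; ring
  rw [hcast] at hlt
  set j := ⌊p⌋₊ with hjdef
  have hjle : (j:ℝ) ≤ p := Nat.floor_le hp0.le
  have hjlt : p < (j:ℝ) + 1 := Nat.lt_floor_add_one p
  have hjm : j ≤ m := by
    have h1 : (j:ℝ) < (m:ℝ) + 1 := lt_of_le_of_lt hjle hlt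
    have h2 : j < m + 1 := by exact_mod_cast h1
    omega
  have hprodpos : ∀ k : ℕ, ((k:ℝ) - 1 < p) → 0 < ∏ i ∈ Finset.range k, (p - (i:ℝ)) := by
    intro k hk
    refine Finset.prod_pos fun i hi => ?_
    have h1 : i + 1 ≤ k := Finset.mem_range.1 hi
    have h2 : (i:ℝ) + 1 ≤ (k:ℝ) := by exact_mod_cast h1
    linarith
  have htrans : ∀ k : ℕ, ∀ t : ℝ, (-1:ℝ)^k * ((∏ i ∈ Finset.range k, (p - (i:ℝ))) * θ^k * t)
      = ((∏ i ∈ Finset.range k, (p - (i:ℝ))) * (-θ)^k) * t := by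
    intro k t; rw [neg_pow]; ring
  by_cases hint : (j:ℝ) = p
  · -- p is a positive integer, p = j ≤ m
    have hj1 : 1 ≤ j := by
      by_contra hc
      have : j = 0 := by omega
      rw [this] at hint
      simp at hint
      linarith
    have hF : ∀ y ∈ Set.Ioo (0:ℝ) x₀,
        iteratedDeriv j (fun x : ℝ => max (1 + θ * x) 0 ^ p) y =
          (∏ i ∈ Finset.range j, (p - (i:ℝ))) * θ ^ j := by
      intro y hy
      rw [iteratedDeriv_pos_side p j y (hpos_of y hy.2)]
      have he : p - (j:ℝ) = 0 := by rw [← hint]; ring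
      rw [he, Real.rpow_zero, mul_one]
    rcases eq_or_lt_of_le hjm with hjm2 | hjm2
    · -- j = m : convexity violated by the jump at x₀
      rw [hjm2] at hF hint
      have hK : 0 < (∏ i ∈ Finset.range m, (p - (i:ℝ))) * (-θ)^m := by
        refine mul_pos (hprodpos m (by linarith)) (pow_pos (neg_pos.2 hθ) m)
      have h1 := hconv.2 (Set.mem_Ioi.2 (show (0:ℝ) < x₀/2 by linarith))
        (Set.mem_Ioi.2 (show (0:ℝ) < 5*x₀/4 by linarith))
        (by norm_num : (0:ℝ) ≤ 1/2) (by norm_num : (0:ℝ) ≤ 1/2) (by norm_num : (1/2:ℝ) + 1/2 = 1)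
      simp only [smul_eq_mul] at h1
      rw [show (1/2:ℝ) * (x₀/2) + (1/2) * (5*x₀/4) = 7*x₀/8 by ring] at h1
      -- beta already reduced
      rw [hF (7*x₀/8) ⟨by linarith, by linarith⟩, hF (x₀/2) ⟨by linarith, by linarith⟩,
        iteratedDeriv_neg_side (ne_of_gt hp0) m (5*x₀/4) (hneg_of _ (by linarith))] at h1
      rw [show ((-1:ℝ)^m * ((∏ i ∈ Finset.range m, (p - (i:ℝ))) * θ ^ m)) =
        ((∏ i ∈ Finset.range m, (p - (i:ℝ))) * (-θ)^m) by rw [neg_pow]; ring] at h1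
      nlinarith
    · -- j < m : iteratedDeriv j is discontinuous at x₀
      have hdif := hdiff j (by omega) x₀ (Set.mem_Ioi.2 hx₀)
      have hct : ContinuousAt (iteratedDeriv j (fun x : ℝ => max (1 + θ * x) 0 ^ p)) x₀ :=
        hdif.continuousAt
      set c := (∏ i ∈ Finset.range j, (p - (i:ℝ))) * θ ^ j with hcdef
      have hc0 : c ≠ 0 :=
        mul_ne_zero (ne_of_gt (hprodpos j (by linarith))) (pow_ne_zero j hθ0)
      have hmemL : Set.Ioo (0:ℝ) x₀ ∈ 𝓝[<] x₀ := Ioo_mem_nhdsLT hx₀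
      have hLev : iteratedDeriv j (fun x : ℝ => max (1 + θ * x) 0 ^ p) =ᶠ[𝓝[<] x₀]
          fun _ => c := eventually_of_mem hmemL fun y hy => hF y hy
      have hL : Tendsto (iteratedDeriv j (fun x : ℝ => max (1 + θ * x) 0 ^ p)) (𝓝[<] x₀)
          (𝓝 (iteratedDeriv j (fun x : ℝ => max (1 + θ * x) 0 ^ p) x₀)) :=
        hct.tendsto.mono_left nhdsWithin_le_nhds
      have e1 : iteratedDeriv j (fun x : ℝ => max (1 + θ * x) 0 ^ p) x₀ = c :=
        tendsto_nhds_unique (Tendsto.congr' hLev hL) tendsto_const_nhds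
      have hRev : iteratedDeriv j (fun x : ℝ => max (1 + θ * x) 0 ^ p) =ᶠ[𝓝[>] x₀]
          fun _ => (0:ℝ) := eventually_of_mem self_mem_nhdsWithin fun y hy =>
            iteratedDeriv_neg_side (ne_of_gt hp0) j y (hneg_of y hy)
      have hR : Tendsto (iteratedDeriv j (fun x : ℝ => max (1 + θ * x) 0 ^ p)) (𝓝[>] x₀)
          (𝓝 (iteratedDeriv j (fun x : ℝ => max (1 + θ * x) 0 ^ p) x₀)) :=
        hct.tendsto.mono_left nhdsWithin_le_nhds
      have e2 : iteratedDeriv j (fun x : ℝ => max (1 + θ * x) 0 ^ p) x₀ = 0 :=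
        tendsto_nhds_unique (Tendsto.congr' hRev hR) tendsto_const_nhds
      exact hc0 (by rw [← e1, e2])
  · -- p is not an integer
    have hjp : (j:ℝ) < p := lt_of_le_of_ne hjle hint
    have hb1 : 1 + θ * (x₀/4) = 3/4 := by linear_combination (1/4) * hθx₀
    have hb2 : 1 + θ * (x₀/2) = 1/2 := by linear_combination (1/2) * hθx₀
    have hb3 : 1 + θ * (3*x₀/8) = 5/8 := by linear_combination (3/8) * hθx₀
    rcases show j + 2 ≤ m ∨ j + 1 = m ∨ j = m by omega with hB | hB | hB
    · -- sign condition fails at order j+2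
      have hs := hsign (j+2) (by omega) (x₀/2) (Set.mem_Ioi.2 (by linarith))
      rw [iteratedDeriv_pos_side p (j+2) (x₀/2) (hpos_of _ (by linarith)), hb2,
        htrans (j+2)] at hs
      have hP : (∏ i ∈ Finset.range (j+2), (p - (i:ℝ))) < 0 := by
        rw [Finset.prod_range_succ]
        refine mul_neg_of_pos_of_neg (hprodpos (j+1) (by push_cast; linarith)) ?_
        push_cast; linarith
      have hq : 0 < (-θ:ℝ)^(j+2) * (1/2:ℝ)^(p - ((j+2:ℕ):ℝ)) :=
        mul_pos (pow_pos (neg_pos.2 hθ) _) (Real.rpow_pos_of_pos (by norm_num) _)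
      nlinarith
    · -- m - 1 < p < m : antitonicity fails
      have hmcast : (m:ℝ) = (j:ℝ) + 1 := by exact_mod_cast congrArg (Nat.cast : ℕ → ℝ) hB.symm
      have hK : 0 < (∏ i ∈ Finset.range m, (p - (i:ℝ))) * (-θ)^m :=
        mul_pos (hprodpos m (by linarith)) (pow_pos (neg_pos.2 hθ) m)
      have ha := hanti (Set.mem_Ioi.2 (show (0:ℝ) < x₀/4 by linarith))
        (Set.mem_Ioi.2 (show (0:ℝ) < x₀/2 by linarith)) (by linarith)
      dsimp only at ha
      rw [iteratedDeriv_pos_side p m (x₀/4) (hpos_of _ (by linarith)),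
        iteratedDeriv_pos_side p m (x₀/2) (hpos_of _ (by linarith)), hb1, hb2,
        htrans m, htrans m] at ha
      have hrp : (3/4:ℝ)^(p - (m:ℝ)) < (1/2:ℝ)^(p - (m:ℝ)) :=
        Real.rpow_lt_rpow_of_neg (by norm_num) (by norm_num) (by linarith)
      nlinarith
    · -- m < p < m + 1 : convexity fails (strict concavity)
      have hmcast : (m:ℝ) = (j:ℝ) := by exact_mod_cast congrArg (Nat.cast : ℕ → ℝ) hB.symm
      have hβ0 : 0 < p - (m:ℝ) := by linarith
      have hβ1 : p - (m:ℝ) < 1 := by linarith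
      have hK : 0 < (∏ i ∈ Finset.range m, (p - (i:ℝ))) * (-θ)^m :=
        mul_pos (hprodpos m (by linarith)) (pow_pos (neg_pos.2 hθ) m)
      have h1 := hconv.2 (Set.mem_Ioi.2 (show (0:ℝ) < x₀/4 by linarith))
        (Set.mem_Ioi.2 (show (0:ℝ) < x₀/2 by linarith))
        (by norm_num : (0:ℝ) ≤ 1/2) (by norm_num : (0:ℝ) ≤ 1/2) (by norm_num : (1/2:ℝ) + 1/2 = 1)
      simp only [smul_eq_mul] at h1
      rw [show (1/2:ℝ) * (x₀/4) + (1/2) * (x₀/2) = 3*x₀/8 by ring] at h1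
      -- beta already reduced
      rw [iteratedDeriv_pos_side p m (3*x₀/8) (hpos_of _ (by linarith)),
        iteratedDeriv_pos_side p m (x₀/4) (hpos_of _ (by linarith)),
        iteratedDeriv_pos_side p m (x₀/2) (hpos_of _ (by linarith)),
        hb1, hb2, hb3, htrans m, htrans m, htrans m] at h1
      have hsc := (Real.strictConcaveOn_rpow hβ0 hβ1).2
        (Set.mem_Ici.2 (by norm_num : (0:ℝ) ≤ 3/4)) (Set.mem_Ici.2 (by norm_num : (0:ℝ) ≤ 1/2))
        (by norm_num : (3/4:ℝ) ≠ 1/2) (by norm_num : (0:ℝ) < 1/2) (by norm_num : (0:ℝ) < 1/2)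
        (by norm_num : (1/2:ℝ) + 1/2 = 1)
      simp only [smul_eq_mul] at hsc
      rw [show (1/2:ℝ) * (3/4) + (1/2) * (1/2) = 5/8 by norm_num] at hsc
      set K := (∏ i ∈ Finset.range m, (p - (i:ℝ))) * (-θ) ^ m with hKd
      set A := (3/4:ℝ) ^ (p - (m:ℝ)) with hAd
      set B := (1/2:ℝ) ^ (p - (m:ℝ)) with hBd
      set C := (5/8:ℝ) ^ (p - (m:ℝ)) with hCd
      have hm2 : K * (1/2 * A + 1/2 * B) < K * C := mul_lt_mul_of_pos_left hsc hK
      have hm3 : K * (1/2 * A + 1/2 * B) = 1/2 * (K * A) + 1/2 * (K * B) := by ring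
      linarith [h1, hm2, hm3]

end Stmt3Aux

/-- The Clayton generator `ψ_θ(x) = (1 + θx)₊^(-1/θ)` with `θ < 0` is `d`-monotone on
`[0,∞)` if and only if `α = -1/θ ≥ d - 1`, i.e. iff `θ ≥ -1/(d-1)`. -/
theorem stmt3 (θ : ℝ) (hθ : θ < 0) (d : ℕ) (hd : 2 ≤ d) :
    (DMonotoneOn d (fun x : ℝ => max (1 + θ * x) 0 ^ (-1/θ)) ↔ (d : ℝ) - 1 ≤ -1/θ) ∧
    ((d : ℝ) - 1 ≤ -1/θ ↔ -(1:ℝ)/((d:ℝ) - 1) ≤ θ) := by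
  have hp0 : 0 < -1/θ := by
    have h1 : 1/θ < 0 := div_neg_of_pos_of_neg one_pos hθ
    have h2 : (-1:ℝ)/θ = -(1/θ) := by ring
    linarith [h2.ge, h2.le]
  have hdR : (2:ℝ) ≤ (d:ℝ) := by exact_mod_cast hd
  have hc : 0 < (d:ℝ) - 1 := by linarith
  have hnθ : 0 < -θ := neg_pos.2 hθ
  constructor
  · exact ⟨fun h => Stmt3Aux.forward hθ hd hp0 h, fun h => Stmt3Aux.backward hθ hd h⟩
  · rw [show (-1:ℝ)/θ = 1/(-θ) from by ring, le_div_iff₀ hnθ, div_le_iff₀ hc]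
    constructor <;> intro h <;> nlinarith
end
end

section
/- Let X be a nonnegative random variable with distribution function F, and let d ≥ 2 be an integer. Define the Williamson d-transform f(x) = E[(1 - x/X)₊^{d-1}] for x > 0 and f(0) = 1 - F(0). Then f is d-monotone on [0,∞), lim_{x→∞} f(x) = 0, and f(0) ∈ [0,1]. -/
open Set MeasureTheory ProbabilityTheory Filter

noncomputable section

namespace Stmt6Aux

def Kern (m p : ℕ) (x t : ℝ) : ℝ := if x < t then (1 - x / t) ^ m / t ^ p else 0

lemma Kern_nonneg {m p : ℕ} {x t : ℝ} (hx : 0 ≤ x) : 0 ≤ Kern m p x t := by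
  unfold Kern
  split
  · next h =>
    have ht : 0 < t := lt_of_le_of_lt hx h
    have h1 : 0 ≤ 1 - x / t := by
      have : x / t ≤ 1 := (div_le_one ht).2 h.le
      linarith
    positivity
  · exact le_refl _

lemma Kern_le {m p : ℕ} {x t : ℝ} (hx : 0 < x) : ‖Kern m p x t‖ ≤ (x ^ p)⁻¹ := by
  rw [Real.norm_eq_abs, abs_of_nonneg (Kern_nonneg hx.le)]
  unfold Kern
  split
  · next h =>
    have ht : 0 < t := hx.trans h
    have h1 : 0 ≤ 1 - x / t := by
      have : x / t ≤ 1 := (div_le_one ht).2 h.le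
      linarith
    have h2 : (1 - x / t) ^ m ≤ 1 := by
      apply pow_le_one₀ h1
      have : 0 < x / t := div_pos hx ht
      linarith
    have h3 : x ^ p ≤ t ^ p := pow_le_pow_left₀ hx.le h.le p
    rw [← one_div (x ^ p)]
    exact div_le_div₀ zero_le_one h2 (pow_pos hx p) h3
  · positivity

lemma Kern_le_one {m : ℕ} {x t : ℝ} (hx : 0 ≤ x) : ‖Kern m 0 x t‖ ≤ 1 := by
  rw [Real.norm_eq_abs, abs_of_nonneg (Kern_nonneg hx)]
  unfold Kern
  split
  · next h =>
    have ht : 0 < t := lt_of_le_of_lt hx h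
    have h1 : 0 ≤ 1 - x / t := by
      have : x / t ≤ 1 := (div_le_one ht).2 h.le
      linarith
    have h2 : (1 - x / t) ^ m ≤ 1 := by
      apply pow_le_one₀ h1
      have : 0 ≤ x / t := div_nonneg hx ht.le
      linarith
    simpa using h2
  · exact zero_le_one

lemma Kern_eq_max {m p : ℕ} (hm : 1 ≤ m) {t : ℝ} (ht : 0 < t) (x : ℝ) :
    Kern m p x t = max (1 - x / t) 0 ^ m / t ^ p := by
  unfold Kern
  split
  · next h =>
    rw [max_eq_left]
    have : x / t < 1 := (div_lt_one ht).2 h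
    linarith
  · next h =>
    push_neg at h
    have h1 : 1 - x / t ≤ 0 := by
      have : (1:ℝ) ≤ x / t := (one_le_div ht).2 h
      linarith
    rw [max_eq_right h1, zero_pow (by omega), zero_div]

lemma Kern_measurable (m p : ℕ) (x : ℝ) : Measurable (Kern m p x) := by
  unfold Kern
  exact Measurable.ite (measurableSet_lt measurable_const measurable_id)
    (((measurable_const.div measurable_id).const_sub 1).pow_const m |>.div
      (measurable_id.pow_const p)) measurable_const

lemma hasDerivAt_maxpow {m : ℕ} (hm : 2 ≤ m) (y : ℝ) :
    HasDerivAt (fun y : ℝ => max y 0 ^ m) ((m : ℝ) * max y 0 ^ (m - 1)) y := by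
  rcases lt_trichotomy y 0 with h | h | h
  · have heq : (fun y : ℝ => max y 0 ^ m) =ᶠ[nhds y] fun _ => (0 : ℝ) := by
      filter_upwards [Iio_mem_nhds h] with z hz
      rw [max_eq_right (le_of_lt hz), zero_pow (by omega)]
    have : ((m : ℝ) * max y 0 ^ (m - 1)) = 0 := by
      rw [max_eq_right h.le, zero_pow (by omega), mul_zero]
    rw [this]
    exact (hasDerivAt_const y 0).congr_of_eventuallyEq heq
  · subst h
    have hval : ((m : ℝ) * max (0:ℝ) 0 ^ (m - 1)) = 0 := by
      rw [max_self, zero_pow (by omega), mul_zero]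
    rw [hval, hasDerivAt_iff_isLittleO]
    simp only [max_self, zero_pow (by omega : m ≠ 0), smul_zero, sub_zero]
    rw [Asymptotics.isLittleO_iff]
    intro c hc
    filter_upwards [Metric.ball_mem_nhds (0:ℝ) (lt_min hc one_pos)] with z hz
    rw [Metric.mem_ball, Real.dist_eq, sub_zero] at hz
    have hz1 : |z| ≤ 1 := (hz.trans_le (min_le_right _ _)).le
    have hzc : |z| ≤ c := (hz.trans_le (min_le_left _ _)).le
    have h1 : |max z 0 ^ m| ≤ |z| ^ m := by
      rw [abs_pow]
      apply pow_le_pow_left₀ (abs_nonneg _)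
      rw [abs_le]
      constructor
      · exact (neg_abs_le z).trans (le_max_left z 0)
      · exact max_le (le_abs_self z) (abs_nonneg z)
    have h2 : |z| ^ m ≤ |z| ^ 2 := pow_le_pow_of_le_one (abs_nonneg z) hz1 hm
    show |max z 0 ^ m| ≤ c * |z|
    calc |max z 0 ^ m| ≤ |z| ^ 2 := h1.trans h2
      _ = |z| * |z| := sq (|z|) ▸ by ring
      _ ≤ c * |z| := mul_le_mul_of_nonneg_right hzc (abs_nonneg z)
  · have heq : (fun y : ℝ => max y 0 ^ m) =ᶠ[nhds y] fun z => z ^ m := by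
      filter_upwards [Ioi_mem_nhds h] with z hz
      rw [max_eq_left (le_of_lt hz)]
    have : ((m : ℝ) * max y 0 ^ (m - 1)) = (m : ℝ) * y ^ (m - 1) := by
      rw [max_eq_left h.le]
    rw [this]
    exact (hasDerivAt_pow m y).congr_of_eventuallyEq heq

lemma Kern_hasDerivAt {m : ℕ} (hm : 2 ≤ m) (p : ℕ) {x : ℝ} (hx : 0 < x) (t : ℝ) :
    HasDerivAt (fun x => Kern m p x t) (-(m : ℝ) * Kern (m - 1) (p + 1) x t) x := by
  rcases le_or_gt t 0 with ht | ht
  · have h0 : Kern (m - 1) (p + 1) x t = 0 := if_neg (by linarith)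
    rw [h0, mul_zero]
    apply (hasDerivAt_const x 0).congr_of_eventuallyEq
    filter_upwards [Ioi_mem_nhds hx] with z hz
    exact if_neg (by simp only [mem_Ioi] at hz; linarith)
  · have h1 : HasDerivAt (fun x : ℝ => 1 - x / t) (-1 / t) x := by
      simpa [neg_div] using ((hasDerivAt_id x).div_const t).const_sub 1
    have key : HasDerivAt (fun x => max (1 - x / t) 0 ^ m / t ^ p)
        ((m : ℝ) * max (1 - x / t) 0 ^ (m - 1) * (-1 / t) / t ^ p) x := by
      exact (((hasDerivAt_maxpow hm (1 - x / t)).comp x h1).div_const _)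
    have e1 : (fun z => Kern m p z t) = fun z => max (1 - z / t) 0 ^ m / t ^ p :=
      funext (Kern_eq_max (by omega) ht)
    have e2 : Kern (m - 1) (p + 1) x t = max (1 - x / t) 0 ^ (m - 1) / t ^ (p + 1) :=
      Kern_eq_max (by omega) ht x
    rw [e1, e2]
    convert key using 1
    have ht' : t ≠ 0 := ne_of_gt ht
    rw [pow_succ]
    generalize ((1 - x / t) ⊔ 0) ^ (m - 1) = M
    field_simp

lemma Kern_anti {p : ℕ} {a b t : ℝ} (ha : 0 < a) (hab : a ≤ b) :
    Kern 1 p b t ≤ Kern 1 p a t := by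
  by_cases h : b < t
  · have h2 : a < t := lt_of_le_of_lt hab h
    have ht : 0 < t := ha.trans h2
    rw [Kern, Kern, if_pos h, if_pos h2, pow_one, pow_one]
    have hdiv : a / t ≤ b / t := by gcongr
    gcongr
  · rw [Kern, if_neg h]
    exact Kern_nonneg ha.le

lemma Kern_cvx {p : ℕ} {a b s u t : ℝ} (ha : 0 < a) (hb : 0 < b) (hs : 0 ≤ s) (hu : 0 ≤ u)
    (hsu : s + u = 1) (ht : 0 ≤ t) :
    Kern 1 p (s * a + u * b) t ≤ s * Kern 1 p a t + u * Kern 1 p b t := by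
  have hx : 0 < s * a + u * b := by
    have hmin : 0 < min a b := lt_min ha hb
    have h1 : s * min a b ≤ s * a := mul_le_mul_of_nonneg_left (min_le_left a b) hs
    have h2 : u * min a b ≤ u * b := mul_le_mul_of_nonneg_left (min_le_right a b) hu
    have h3 : s * min a b + u * min a b = min a b := by linear_combination (min a b) * hsu
    linarith
  rcases eq_or_lt_of_le ht with h | h
  · unfold Kern
    rw [if_neg (show ¬ s * a + u * b < t by linarith), if_neg (show ¬ a < t by linarith),
      if_neg (show ¬ b < t by linarith)]
    simp
  · rw [Kern_eq_max le_rfl h, Kern_eq_max le_rfl h, Kern_eq_max le_rfl h]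
    simp only [pow_one]
    have ht' : t ≠ 0 := ne_of_gt h
    have e : 1 - (s * a + u * b) / t = s * (1 - a / t) + u * (1 - b / t) := by
      field_simp
      linear_combination (-t) * hsu
    have hmax : max (1 - (s * a + u * b) / t) 0 ≤
        s * max (1 - a / t) 0 + u * max (1 - b / t) 0 := by
      apply max_le
      · rw [e]
        exact add_le_add (mul_le_mul_of_nonneg_left (le_max_left _ _) hs)
          (mul_le_mul_of_nonneg_left (le_max_left _ _) hu)
      · exact add_nonneg (mul_nonneg hs (le_max_right _ _)) (mul_nonneg hu (le_max_right _ _))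
    calc max (1 - (s * a + u * b) / t) 0 / t ^ p
        ≤ (s * max (1 - a / t) 0 + u * max (1 - b / t) 0) / t ^ p := by gcongr
      _ = s * (max (1 - a / t) 0 / t ^ p) + u * (max (1 - b / t) 0 / t ^ p) := by ring

lemma neg_one_sq_mul (k : ℕ) (A : ℝ) : (-1 : ℝ) ^ k * ((-1) ^ k * A) = A := by
  rw [← mul_assoc, ← mul_pow]
  norm_num

end Stmt6Aux

open Stmt6Aux in
/-- The Williamson `d`-transform `f(x) = E[(1 - x/X)₊^(d-1) 1{X > x}]` of a nonnegative
random variable `X` is `d`-monotone on `[0,∞)`, tends to `0` at `∞`, and satisfies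
`f 0 = 1 - F 0 ∈ [0,1]`. -/
theorem stmt6 {Ω : Type*} [MeasurableSpace Ω] (μ : Measure Ω) [IsProbabilityMeasure μ]
    (X : Ω → ℝ) (hX : Measurable X) (hX0 : ∀ ω, 0 ≤ X ω) (d : ℕ) (hd : 2 ≤ d)
    (f : ℝ → ℝ)
    (hf : ∀ x : ℝ, f x = ∫ ω, (if x < X ω then (1 - x / X ω) ^ (d - 1) else 0) ∂μ) :
    DMonotoneOn d f ∧ Filter.Tendsto f Filter.atTop (nhds 0) ∧
      f 0 = 1 - (μ {ω | X ω ≤ 0}).toReal ∧ f 0 ∈ Set.Icc (0:ℝ) 1 := by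
  have hd1 : 1 ≤ d - 1 := by omega
  have hmeas : ∀ (m p : ℕ) (x : ℝ), AEStronglyMeasurable (fun ω => Kern m p x (X ω)) μ :=
    fun m p x => ((Kern_measurable m p x).comp hX).aestronglyMeasurable
  have hint : ∀ (m p : ℕ) {x : ℝ}, 0 < x → Integrable (fun ω => Kern m p x (X ω)) μ := by
    intro m p x hx
    exact (integrable_const ((x ^ p)⁻¹)).mono' (hmeas m p x)
      (Filter.Eventually.of_forall fun ω => Kern_le hx)
  have hfG : ∀ x : ℝ, f x = ∫ ω, Kern (d - 1) 0 x (X ω) ∂μ := by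
    intro x
    rw [hf x]
    congr 1
    funext ω
    simp [Kern]
  have hG : ∀ (m p : ℕ), 2 ≤ m → ∀ {x : ℝ}, 0 < x →
      HasDerivAt (fun y => ∫ ω, Kern m p y (X ω) ∂μ)
        (-(m : ℝ) * ∫ ω, Kern (m - 1) (p + 1) x (X ω) ∂μ) x := by
    intro m p hm x hx
    have hball : ∀ y ∈ Metric.ball x (x / 2), 0 < y := by
      intro y hy
      rw [Metric.mem_ball, Real.dist_eq, abs_sub_lt_iff] at hy
      linarith [hy.2]
    have h := hasDerivAt_integral_of_dominated_loc_of_deriv_le (μ := μ)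
      (F := fun y ω => Kern m p y (X ω))
      (F' := fun y ω => -(m : ℝ) * Kern (m - 1) (p + 1) y (X ω))
      (bound := fun _ => (m : ℝ) * ((x / 2) ^ (p + 1))⁻¹)
      (Metric.ball_mem_nhds x (show (0:ℝ) < x / 2 by positivity))
      (Filter.Eventually.of_forall fun y => hmeas m p y)
      (hint m p hx)
      ((hmeas (m - 1) (p + 1) x).const_mul _)
      ?_ (integrable_const _)
      (Filter.Eventually.of_forall fun ω y hy => Kern_hasDerivAt hm p (hball y hy) (X ω))
    · have h2 := h.2
      rwa [MeasureTheory.integral_const_mul] at h2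
    · apply Filter.Eventually.of_forall
      intro ω y hy
      have hy0 : 0 < y := hball y hy
      have hy2 : x / 2 ≤ y := by
        rw [Metric.mem_ball, Real.dist_eq, abs_sub_lt_iff] at hy
        linarith [hy.1]
      rw [norm_mul, norm_neg, Real.norm_natCast]
      apply mul_le_mul_of_nonneg_left _ (Nat.cast_nonneg m)
      refine (Kern_le hy0).trans ?_
      gcongr
  have hIter : ∀ k, k ≤ d - 2 → ∀ {x : ℝ}, 0 < x →
      iteratedDeriv k f x = (-1) ^ k * (∏ j ∈ Finset.range k, ((d - 1 - j : ℕ) : ℝ)) *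
        ∫ ω, Kern (d - 1 - k) k x (X ω) ∂μ := by
    intro k
    induction k with
    | zero =>
      intro _ x hx
      simp [iteratedDeriv_zero, hfG x]
    | succ k ih =>
      intro hk x hx
      have hk' : k ≤ d - 2 := by omega
      have hm2 : 2 ≤ d - 1 - k := by omega
      have heq : iteratedDeriv k f =ᶠ[nhds x]
          fun y => (-1) ^ k * (∏ j ∈ Finset.range k, ((d - 1 - j : ℕ) : ℝ)) *
            ∫ ω, Kern (d - 1 - k) k y (X ω) ∂μ := by
        filter_upwards [Ioi_mem_nhds hx] with y hy
        exact ih hk' hy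
      have hD : HasDerivAt (fun y => (-1 : ℝ) ^ k *
            (∏ j ∈ Finset.range k, ((d - 1 - j : ℕ) : ℝ)) *
            ∫ ω, Kern (d - 1 - k) k y (X ω) ∂μ)
          ((-1) ^ k * (∏ j ∈ Finset.range k, ((d - 1 - j : ℕ) : ℝ)) *
            (-((d - 1 - k : ℕ) : ℝ) * ∫ ω, Kern (d - 1 - k - 1) (k + 1) x (X ω) ∂μ)) x :=
        (hG (d - 1 - k) k hm2 hx).const_mul _
      rw [iteratedDeriv_succ, heq.deriv_eq, hD.deriv]
      rw [show d - 1 - k - 1 = d - 1 - (k + 1) from by omega, Finset.prod_range_succ]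
      ring
  constructor
  · refine ⟨?_, ?_, ?_, ?_, ?_⟩
    · -- continuity
      rw [show f = fun x => ∫ ω, Kern (d - 1) 0 x (X ω) ∂μ from funext hfG]
      intro x₀ hx₀
      apply continuousWithinAt_of_dominated (bound := fun _ => (1:ℝ))
      · exact Filter.Eventually.of_forall fun y => hmeas _ _ y
      · filter_upwards [self_mem_nhdsWithin] with y hy
        exact Filter.Eventually.of_forall fun ω => Kern_le_one hy
      · exact integrable_const 1
      · apply Filter.Eventually.of_forall
        intro ω
        rcases eq_or_lt_of_le (hX0 ω) with h | h
        · refine (continuousWithinAt_const (b := (0:ℝ))).congr ?_ ?_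
          · intro y hy
            exact if_neg (by rw [mem_Ici] at hy; linarith)
          · exact if_neg (by rw [mem_Ici] at hx₀; linarith)
        · rw [show (fun x => Kern (d-1) 0 x (X ω))
              = fun x => max (1 - x / X ω) 0 ^ (d-1) / (X ω) ^ 0 from
            funext (Kern_eq_max hd1 h)]
          exact (((continuous_const.sub (continuous_id.div_const _)).max
            continuous_const).pow _ |>.div_const _).continuousWithinAt
    · -- differentiability
      intro k hk x hx
      rw [mem_Ioi] at hx
      have heq : iteratedDeriv k f =ᶠ[nhds x]
          fun y => (-1) ^ k * (∏ j ∈ Finset.range k, ((d - 1 - j : ℕ) : ℝ)) *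
            ∫ ω, Kern (d - 1 - k) k y (X ω) ∂μ := by
        filter_upwards [Ioi_mem_nhds hx] with y hy
        exact hIter k (by omega) hy
      rw [heq.differentiableAt_iff]
      exact ((hG (d - 1 - k) k (by omega) hx).const_mul _).differentiableAt
    · -- sign
      intro k hk x hx
      rw [mem_Ioi] at hx
      rw [hIter k (by omega) hx, mul_assoc ((-1:ℝ)^k), neg_one_sq_mul]
      exact mul_nonneg (Finset.prod_nonneg fun j _ => Nat.cast_nonneg _)
        (integral_nonneg fun ω => Kern_nonneg hx.le)
    · -- antitone
      intro a ha b hb hab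
      rw [mem_Ioi] at ha hb
      simp only [hIter (d-2) le_rfl ha, hIter (d-2) le_rfl hb,
        show d - 1 - (d - 2) = 1 from by omega]
      rw [mul_assoc ((-1:ℝ)^(d-2)), neg_one_sq_mul, mul_assoc ((-1:ℝ)^(d-2)), neg_one_sq_mul]
      refine mul_le_mul_of_nonneg_left ?_ (Finset.prod_nonneg fun j _ => Nat.cast_nonneg _)
      exact integral_mono (hint 1 (d-2) hb) (hint 1 (d-2) ha) fun ω => Kern_anti ha hab
    · -- convex
      refine ⟨convex_Ioi 0, ?_⟩
      intro a ha b hb s u hs hu hsu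
      rw [mem_Ioi] at ha hb
      have hsm : s • a + u • b = s * a + u * b := by simp [smul_eq_mul]
      have hx : 0 < s * a + u * b := by
        have hmin : 0 < min a b := lt_min ha hb
        have h1 : s * min a b ≤ s * a := mul_le_mul_of_nonneg_left (min_le_left a b) hs
        have h2 : u * min a b ≤ u * b := mul_le_mul_of_nonneg_left (min_le_right a b) hu
        have h3 : s * min a b + u * min a b = min a b := by linear_combination (min a b) * hsu
        linarith
      simp only [smul_eq_mul, hIter (d-2) le_rfl hx, hIter (d-2) le_rfl ha,
        hIter (d-2) le_rfl hb, show d - 1 - (d - 2) = 1 from by omega]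
      rw [mul_assoc ((-1:ℝ)^(d-2)), neg_one_sq_mul, mul_assoc ((-1:ℝ)^(d-2)), neg_one_sq_mul,
        mul_assoc ((-1:ℝ)^(d-2)), neg_one_sq_mul]
      have key : ∫ ω, Kern 1 (d-2) (s*a+u*b) (X ω) ∂μ ≤
          s * ∫ ω, Kern 1 (d-2) a (X ω) ∂μ + u * ∫ ω, Kern 1 (d-2) b (X ω) ∂μ := by
        calc ∫ ω, Kern 1 (d-2) (s*a+u*b) (X ω) ∂μ
            ≤ ∫ ω, (s * Kern 1 (d-2) a (X ω) + u * Kern 1 (d-2) b (X ω)) ∂μ :=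
              integral_mono (hint _ _ hx)
                (((hint 1 (d-2) ha).const_mul s).add ((hint 1 (d-2) hb).const_mul u))
                (fun ω => Kern_cvx ha hb hs hu hsu (hX0 ω))
          _ = _ := by
              rw [integral_add ((hint 1 (d-2) ha).const_mul s) ((hint 1 (d-2) hb).const_mul u),
                MeasureTheory.integral_const_mul, MeasureTheory.integral_const_mul]
      have hP : (0:ℝ) ≤ ∏ j ∈ Finset.range (d-2), ((d - 1 - j : ℕ) : ℝ) :=
        Finset.prod_nonneg fun j _ => Nat.cast_nonneg _
      nlinarith [mul_le_mul_of_nonneg_left key hP]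
  refine ⟨?_, ?_⟩
  · -- tendsto
    rw [show f = fun x => ∫ ω, Kern (d - 1) 0 x (X ω) ∂μ from funext hfG]
    have h := MeasureTheory.tendsto_integral_filter_of_dominated_convergence (μ := μ)
      (F := fun (x : ℝ) ω => Kern (d-1) 0 x (X ω)) (f := fun _ => (0:ℝ))
      (bound := fun _ => (1:ℝ)) (l := atTop)
      (Filter.Eventually.of_forall fun y => hmeas _ _ y)
      (by filter_upwards [eventually_ge_atTop (0:ℝ)] with y hy
          exact Filter.Eventually.of_forall fun ω => Kern_le_one hy)
      (integrable_const 1)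
      (Filter.Eventually.of_forall fun ω => by
        apply Filter.Tendsto.congr' _ tendsto_const_nhds
        filter_upwards [eventually_ge_atTop (X ω)] with x hx
        exact (if_neg (not_lt.2 hx)).symm)
    simpa using h
  · -- f 0
    have hzero : f 0 = (μ {ω | 0 < X ω}).toReal := by
      rw [hf 0]
      have hiq : ∀ ω, (if (0:ℝ) < X ω then (1 - 0 / X ω) ^ (d-1) else 0)
          = Set.indicator {ω | 0 < X ω} (fun _ => (1:ℝ)) ω := by
        intro ω
        by_cases h : 0 < X ω
        · simp [h, Set.indicator_of_mem]
        · simp [h, Set.indicator_of_notMem]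
      rw [show (fun ω => if (0:ℝ) < X ω then (1 - 0 / X ω) ^ (d-1) else 0)
          = Set.indicator {ω | 0 < X ω} (fun _ => (1:ℝ)) from funext hiq]
      rw [MeasureTheory.integral_indicator_const _
        (show MeasurableSet {ω | 0 < X ω} from hX measurableSet_Ioi)]
      simp [Measure.real]
    have hle1 : (μ {ω | 0 < X ω}).toReal ≤ 1 := by
      have := ENNReal.toReal_mono (a := μ {ω | 0 < X ω}) (b := 1) ENNReal.one_ne_top prob_le_one
      simpa using this
    refine ⟨?_, ?_⟩
    · rw [hzero]
      have hms : MeasurableSet {ω | X ω ≤ 0} := hX measurableSet_Iic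
      have h1 : {ω | 0 < X ω} = {ω | X ω ≤ 0}ᶜ := by ext ω; simp [not_le]
      rw [h1, measure_compl hms (measure_ne_top μ _), measure_univ,
        ENNReal.toReal_sub_of_le prob_le_one ENNReal.one_ne_top]
      simp
    · exact ⟨by rw [hzero]; exact ENNReal.toReal_nonneg, by rw [hzero]; exact hle1⟩
end
end

section
/- Let d ≥ 2 and let F be the distribution function of a nonnegative random variable. If f is the Williamson d-transform of F, then for every x ∈ (0,∞), F(x) = 1 - Σ_{k=0}^{d-2} (-1)^k x^k f^{(k)}(x)/k! - (-1)^{d-1} x^{d-1} f₊^{(d-1)}(x)/(d-1)!, where f₊^{(d-1)} denotes the right-hand derivative of f^{(d-2)}. -/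
open Set MeasureTheory ProbabilityTheory Filter Topology

noncomputable section

namespace WilliamsonAux

/-- The kernel of the Williamson transform and its derivatives. -/
def kern (t : ℝ) (m k : ℕ) (y : ℝ) : ℝ := if y < t then (1 - y/t)^m / t^k else 0

lemma kern_of_lt {t y : ℝ} (hyt : y < t) (m k : ℕ) : kern t m k y = (1 - y/t)^m / t^k :=
  if_pos hyt

lemma kern_of_le {t y : ℝ} (hty : t ≤ y) (m k : ℕ) : kern t m k y = 0 :=
  if_neg (not_lt.2 hty)

lemma kern_eq_max {t : ℝ} (ht : 0 < t) {m : ℕ} (hm : 1 ≤ m) (k : ℕ) (y : ℝ) :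
    kern t m k y = max (1 - y/t) 0 ^ m / t^k := by
  rcases lt_or_ge y t with hyt | hty
  · rw [kern_of_lt hyt]
    congr 2
    rw [max_eq_left]
    have := (div_lt_one ht).2 hyt
    linarith
  · rw [kern_of_le hty, max_eq_right, zero_pow (by omega), zero_div]
    have := (one_le_div ht).2 hty
    linarith

lemma abs_pow_sub_pow_le {p q : ℝ} (hp0 : 0 ≤ p) (hp1 : p ≤ 1) (hq0 : 0 ≤ q) (hq1 : q ≤ 1)
    (m : ℕ) : |p ^ m - q ^ m| ≤ m * |p - q| := by
  induction m with
  | zero => simp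
  | succ n ih =>
    have h1 : p ^ (n+1) - q ^ (n+1) = p * (p ^ n - q ^ n) + (p - q) * q ^ n := by ring
    have h2 : |p ^ (n+1) - q ^ (n+1)| ≤ |p * (p ^ n - q ^ n)| + |(p - q) * q ^ n| :=
      h1 ▸ abs_add_le _ _
    have h3 : |p * (p ^ n - q ^ n)| ≤ |p ^ n - q ^ n| := by
      rw [abs_mul, abs_of_nonneg hp0]
      nlinarith [abs_nonneg (p ^ n - q ^ n)]
    have h4 : |(p - q) * q ^ n| ≤ |p - q| := by
      rw [abs_mul, abs_of_nonneg (pow_nonneg hq0 n)]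
      nlinarith [abs_nonneg (p - q), pow_le_one₀ hq0 hq1 (n := n)]
    push_cast
    linarith

lemma kern_lip {t c a b : ℝ} (hc : 0 < c) (ha : c ≤ a) (hb : c ≤ b)
    {m : ℕ} (hm : 1 ≤ m) (k : ℕ) :
    |kern t m k b - kern t m k a| ≤ ((m : ℝ) / c ^ (k+1)) * |b - a| := by
  rcases le_or_gt t c with htc | hct
  · rw [kern_of_le (htc.trans hb), kern_of_le (htc.trans ha), sub_zero, abs_zero]
    positivity
  · have ht0 : 0 < t := hc.trans hct
    rw [kern_eq_max ht0 hm, kern_eq_max ht0 hm, div_sub_div_same, abs_div,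
      abs_of_pos (pow_pos ht0 k)]
    have hb1 : max (1 - b/t) 0 ≤ 1 := by
      apply max_le _ zero_le_one
      have : 0 ≤ b / t := div_nonneg (hc.le.trans hb) ht0.le
      linarith
    have ha1 : max (1 - a/t) 0 ≤ 1 := by
      apply max_le _ zero_le_one
      have : 0 ≤ a / t := div_nonneg (hc.le.trans ha) ht0.le
      linarith
    have key : |max (1 - b/t) 0 ^ m - max (1 - a/t) 0 ^ m| ≤ (m:ℝ) * |b - a| / t := by
      calc |max (1 - b/t) 0 ^ m - max (1 - a/t) 0 ^ m|
          ≤ (m:ℝ) * |max (1 - b/t) 0 - max (1 - a/t) 0| :=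
            abs_pow_sub_pow_le (le_max_right _ _) hb1 (le_max_right _ _) ha1 m
        _ ≤ (m:ℝ) * |(1 - b/t) - (1 - a/t)| :=
            mul_le_mul_of_nonneg_left (abs_max_sub_max_le_abs _ _ _) (Nat.cast_nonneg m)
        _ = (m:ℝ) * (|b - a| / t) := by
            rw [show (1 - b/t) - (1 - a/t) = -((b - a)/t) by ring, abs_neg, abs_div,
              abs_of_pos ht0]
        _ = (m:ℝ) * |b - a| / t := (mul_div_assoc _ _ _).symm
    calc |max (1 - b/t) 0 ^ m - max (1 - a/t) 0 ^ m| / t ^ k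
        ≤ ((m:ℝ) * |b - a| / t) / t ^ k := by gcongr
      _ = (m:ℝ) * |b - a| / t ^ (k+1) := by rw [div_div, ← pow_succ']
      _ ≤ (m:ℝ) * |b - a| / c ^ (k+1) :=
          div_le_div_of_nonneg_left (by positivity) (by positivity) (pow_le_pow_left₀ hc.le hct.le _)
      _ = ((m:ℝ) / c ^ (k+1)) * |b - a| := by ring

lemma hasDerivAt_kern_of_lt {t x : ℝ} (hxt : x < t) (hx : 0 < x) {m : ℕ} (hm : 1 ≤ m) (k : ℕ) :
    HasDerivAt (kern t m k) (-(m:ℝ) * kern t (m-1) (k+1) x) x := by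
  have ht0 : 0 < t := hx.trans hxt
  have ht : t ≠ 0 := ht0.ne'
  have hbase : HasDerivAt (fun y : ℝ => 1 - y / t) (0 - 1 / t) x :=
    (hasDerivAt_const x (1:ℝ)).sub ((hasDerivAt_id x).div_const t)
  have h1 : HasDerivAt (fun y : ℝ => (1 - y / t) ^ m / t ^ k)
      ((m : ℝ) * (1 - x / t) ^ (m - 1) * (0 - 1 / t) / t ^ k) x := (hbase.pow m).div_const _
  have h2 : kern t m k =ᶠ[𝓝 x] fun y => (1 - y / t) ^ m / t ^ k := by
    filter_upwards [Iio_mem_nhds hxt] with y hy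
    exact kern_of_lt hy m k
  have h3 := h1.congr_of_eventuallyEq h2
  have hval : -(m:ℝ) * kern t (m-1) (k+1) x
      = (m : ℝ) * (1 - x / t) ^ (m - 1) * (0 - 1 / t) / t ^ k := by
    rw [kern_of_lt hxt, pow_succ]
    ring
  rw [hval]
  exact h3

lemma hasDerivAt_kern_of_gt {t x : ℝ} (htx : t < x) (m k : ℕ) :
    HasDerivAt (kern t m k) (-(m:ℝ) * kern t (m-1) (k+1) x) x := by
  have h2 : kern t m k =ᶠ[𝓝 x] fun _ => (0:ℝ) := by
    filter_upwards [Ioi_mem_nhds htx] with y hy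
    exact kern_of_le hy.le m k
  have h3 := (hasDerivAt_const x (0:ℝ)).congr_of_eventuallyEq h2
  simpa [kern_of_le htx.le] using h3

lemma hasDerivAt_kern_self {t : ℝ} (ht : 0 < t) {m : ℕ} (hm : 2 ≤ m) (k : ℕ) :
    HasDerivAt (kern t m k) 0 t := by
  rw [hasDerivAt_iff_tendsto_slope, tendsto_zero_iff_norm_tendsto_zero]
  apply squeeze_zero' (g := fun y => |y - t| / t ^ (k+2))
      (Eventually.of_forall fun y => norm_nonneg _)
  · filter_upwards [nhdsWithin_le_nhds (Ioi_mem_nhds ht)] with y hy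
    have hy0 : 0 < y := hy
    rw [Real.norm_eq_abs, slope_def_field, kern_of_le le_rfl, sub_zero]
    rcases le_or_gt t y with hty | hyt
    · rw [kern_of_le hty, zero_div, abs_zero]
      positivity
    · set u := t - y with hu
      have hu0 : 0 < u := by simp [hu]; linarith
      have hut : u ≤ t := by simp [hu]; linarith
      have h1 : 1 - y / t = u / t := by rw [hu]; field_simp
      have h2 : kern t m k y / (y - t) = -((u/t)^m / t^k / u) := by
        rw [kern_of_lt hyt, h1, show y - t = -u by simp [hu]]
        field_simp
      rw [h2, abs_neg, abs_of_nonneg (by positivity)]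
      have h3 : (u/t)^m ≤ (u/t)^2 := by
        apply pow_le_pow_of_le_one (by positivity) ((div_le_one ht).2 hut) hm
      have h4 : (u/t)^2 / t^k / u = u / t^(k+2) := by
        field_simp
        ring
      calc (u/t)^m / t^k / u ≤ (u/t)^2 / t^k / u := by gcongr
        _ = u / t^(k+2) := h4
        _ = |y - t| / t^(k+2) := by
            rw [show y - t = -u by simp [hu], abs_neg, abs_of_pos hu0]
  · have hc : Tendsto (fun y : ℝ => |y - t| / t ^ (k+2)) (𝓝 t) (𝓝 (|t - t| / t ^ (k+2))) := by
      apply Tendsto.div_const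
      exact ((continuous_id.sub continuous_const).abs).tendsto t
    simpa using hc.mono_left nhdsWithin_le_nhds

lemma hasDerivAt_kern {t x : ℝ} (ht : 0 ≤ t) (hx : 0 < x) {m : ℕ} (hm : 2 ≤ m) (k : ℕ) :
    HasDerivAt (kern t m k) (-(m:ℝ) * kern t (m-1) (k+1) x) x := by
  rcases lt_trichotomy x t with hxt | rfl | htx
  · exact hasDerivAt_kern_of_lt hxt hx (by omega) k
  · simpa [kern_of_le le_rfl] using hasDerivAt_kern_self hx hm k
  · exact hasDerivAt_kern_of_gt htx m k

lemma hasDerivWithinAt_kern_one {t x : ℝ} (hx : 0 < x) (k : ℕ) :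
    HasDerivWithinAt (kern t 1 k) (-(1:ℝ) * kern t 0 (k+1) x) (Ici x) x := by
  rcases lt_or_ge x t with hxt | htx
  · have h := (hasDerivAt_kern_of_lt hxt hx le_rfl k).hasDerivWithinAt (s := Ici x)
    simpa using h
  · have h0 : HasDerivWithinAt (fun _ : ℝ => (0:ℝ)) 0 (Ici x) x := hasDerivWithinAt_const _ _ _
    have h := h0.congr (fun y hy => kern_of_le (htx.trans hy) 1 k) (kern_of_le htx 1 k)
    simpa [kern_of_le htx] using h

section Integral

variable {Ω : Type*} [MeasurableSpace Ω] (μ : Measure Ω) [IsProbabilityMeasure μ]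
  (X : Ω → ℝ)

/-- The integral of the kernel against the law of `X`. -/
def intK (m k : ℕ) (y : ℝ) : ℝ := ∫ ω, kern (X ω) m k y ∂μ

lemma aesm_kern (hX : Measurable X) (m k : ℕ) (y : ℝ) :
    AEStronglyMeasurable (fun ω => kern (X ω) m k y) μ := by
  apply Measurable.aestronglyMeasurable
  unfold kern
  exact Measurable.ite (measurableSet_lt measurable_const hX)
    (((measurable_const.sub (measurable_const.div hX)).pow_const m).div (hX.pow_const k))
    measurable_const

lemma kern_norm_le {t y : ℝ} (hy : 0 < y) (m k : ℕ) :
    ‖kern t m k y‖ ≤ 1 / y ^ k := by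
  rcases lt_or_ge y t with hyt | hty
  · rw [kern_of_lt hyt, Real.norm_eq_abs]
    have ht0 : 0 < t := hy.trans hyt
    have h1 : 0 ≤ 1 - y / t := by
      have := (div_lt_one ht0).2 hyt; linarith
    have h2 : 1 - y / t ≤ 1 := by
      have : 0 ≤ y / t := div_nonneg hy.le ht0.le; linarith
    rw [abs_of_nonneg (div_nonneg (pow_nonneg h1 m) (pow_nonneg ht0.le k))]
    exact div_le_div₀ (by norm_num) (pow_le_one₀ h1 h2) (pow_pos hy k)
      (pow_le_pow_left₀ hy.le hyt.le k)
  · rw [kern_of_le hty, norm_zero]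
    positivity

lemma integrable_kern (hX : Measurable X) {y : ℝ} (hy : 0 < y) (m k : ℕ) :
    Integrable (fun ω => kern (X ω) m k y) μ := by
  apply Integrable.mono' (integrable_const (1 / y ^ k)) (aesm_kern μ X hX m k y)
  exact Eventually.of_forall fun ω => kern_norm_le hy m k

lemma tendsto_slope_integral (hX : Measurable X) (hX0 : ∀ ω, 0 ≤ X ω) {x : ℝ} (hx : 0 < x) {m : ℕ} (hm : 1 ≤ m) (k : ℕ)
    {l : Filter ℝ} [l.IsCountablyGenerated] (hl : l ≤ 𝓝 x)
    (hpt : ∀ t, 0 ≤ t → Tendsto (slope (kern t m k) x) l (𝓝 (-(m:ℝ) * kern t (m-1) (k+1) x))) :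
    Tendsto (slope (intK μ X m k) x) l
      (𝓝 (∫ ω, -(m:ℝ) * kern (X ω) (m-1) (k+1) x ∂μ)) := by
  have hmain : Tendsto (fun y => ∫ ω, slope (kern (X ω) m k) x y ∂μ) l
      (𝓝 (∫ ω, -(m:ℝ) * kern (X ω) (m-1) (k+1) x ∂μ)) := by
    apply tendsto_integral_filter_of_dominated_convergence
      (bound := fun _ => (m:ℝ) / (x/2) ^ (k+1))
    · apply Eventually.of_forall
      intro y
      simp only [slope_def_field, div_eq_mul_inv]
      exact ((aesm_kern μ X hX m k y).sub (aesm_kern μ X hX m k x)).mul_const _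
    · filter_upwards [hl (Ioi_mem_nhds (by linarith : x/2 < x))] with y hy
      apply Eventually.of_forall
      intro ω
      rcases eq_or_ne y x with rfl | hyx
      · simp only [slope_def_field, sub_self, zero_div, norm_zero]
        positivity
      · rw [slope_def_field, Real.norm_eq_abs, abs_div,
          div_le_iff₀ (abs_pos.2 (sub_ne_zero.2 hyx))]
        exact kern_lip (by positivity : (0:ℝ) < x/2) (by linarith) (le_of_lt hy) hm k
    · exact integrable_const _
    · exact Eventually.of_forall fun ω => hpt (X ω) (hX0 ω)
  have hev : (fun y => ∫ ω, slope (kern (X ω) m k) x y ∂μ) =ᶠ[l] slope (intK μ X m k) x := by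
    filter_upwards [hl (Ioi_mem_nhds hx)] with y hy
    simp only [slope_def_field, intK]
    rw [← integral_sub (integrable_kern μ X hX hy m k) (integrable_kern μ X hX hx m k),
      integral_div]
  exact Tendsto.congr' hev hmain

lemma hasDerivAt_intK (hX : Measurable X) (hX0 : ∀ ω, 0 ≤ X ω) {x : ℝ} (hx : 0 < x) {m : ℕ} (hm : 2 ≤ m) (k : ℕ) :
    HasDerivAt (intK μ X m k) (-(m:ℝ) * intK μ X (m-1) (k+1) x) x := by
  have h : HasDerivAt (intK μ X m k) (∫ ω, -(m:ℝ) * kern (X ω) (m-1) (k+1) x ∂μ) x := by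
    rw [hasDerivAt_iff_tendsto_slope]
    exact tendsto_slope_integral μ X hX hX0 hx (by omega) k nhdsWithin_le_nhds
      (fun t ht => hasDerivAt_iff_tendsto_slope.1 (hasDerivAt_kern ht hx hm k))
  rwa [integral_const_mul, ← intK] at h

lemma hasDerivWithinAt_intK_one (hX : Measurable X) (hX0 : ∀ ω, 0 ≤ X ω) {x : ℝ} (hx : 0 < x) (k : ℕ) :
    HasDerivWithinAt (intK μ X 1 k) (-(1:ℝ) * intK μ X 0 (k+1) x) (Ici x) x := by
  have h : HasDerivWithinAt (intK μ X 1 k)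
      (∫ ω, -((1:ℕ):ℝ) * kern (X ω) (1-1) (k+1) x ∂μ) (Ici x) x := by
    rw [hasDerivWithinAt_iff_tendsto_slope, Set.Ici_sdiff_left]
    exact tendsto_slope_integral μ X hX hX0 hx le_rfl k nhdsWithin_le_nhds
      (fun t ht => by
        have h1 := hasDerivWithinAt_kern_one (t := t) hx k
        rw [hasDerivWithinAt_iff_tendsto_slope, Set.Ici_sdiff_left] at h1
        simpa using h1)
  simp only [Nat.cast_one] at h
  rwa [integral_const_mul, ← intK] at h

end Integral

end WilliamsonAux

open WilliamsonAux in
/-- Inversion formula for the Williamson `d`-transform: if `f` is the Williamson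
`d`-transform of the law of a nonnegative random variable `X` with distribution
function `F`, then for every `x > 0`,
`F(x) = 1 - ∑_{k=0}^{d-2} (-1)^k x^k f^(k)(x)/k! - (-1)^(d-1) x^(d-1) f₊^(d-1)(x)/(d-1)!`,
where `f₊^(d-1)` is the right-hand derivative of `f^(d-2)`. -/
theorem stmt7 {Ω : Type*} [MeasurableSpace Ω] (μ : Measure Ω) [IsProbabilityMeasure μ]
    (X : Ω → ℝ) (hX : Measurable X) (hX0 : ∀ ω, 0 ≤ X ω) (d : ℕ) (hd : 2 ≤ d)
    (f : ℝ → ℝ)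
    (hf : ∀ x : ℝ, f x = ∫ ω, (if x < X ω then (1 - x / X ω) ^ (d - 1) else 0) ∂μ) :
    ∀ x ∈ Set.Ioi (0:ℝ),
      (μ {ω | X ω ≤ x}).toReal =
        1 - (∑ k ∈ Finset.range (d - 1),
              (-1:ℝ)^k * x^k * iteratedDeriv k f x / (k.factorial : ℝ))
          - (-1:ℝ)^(d-1) * x^(d-1) *
              derivWithin (iteratedDeriv (d-2) f) (Set.Ici x) x / ((d-1).factorial : ℝ) := by
  intro x hx
  rw [Set.mem_Ioi] at hx
  -- Step 1: closed form for the iterated derivatives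
  have hiter : ∀ j, j ≤ d - 2 → ∀ y : ℝ, 0 < y →
      iteratedDeriv j f y
        = (-1:ℝ)^j * ((d-1).descFactorial j : ℝ) * intK μ X (d-1-j) j y := by
    intro j
    induction j with
    | zero =>
      intro _ y hy
      simp only [iteratedDeriv_zero, pow_zero, Nat.descFactorial_zero, Nat.cast_one, one_mul,
        Nat.sub_zero]
      rw [hf y]
      unfold intK
      refine integral_congr_ae (Eventually.of_forall fun ω => ?_)
      unfold kern
      simp
    | succ j ih =>
      intro hj y hy
      have hj' : j ≤ d - 2 := by omega
      have hm : 2 ≤ d - 1 - j := by omega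
      rw [iteratedDeriv_succ]
      have hev : iteratedDeriv j f =ᶠ[𝓝 y]
          fun z => ((-1:ℝ)^j * ((d-1).descFactorial j : ℝ)) * intK μ X (d-1-j) j z := by
        filter_upwards [Ioi_mem_nhds hy] with z hz
        rw [ih hj' z hz, mul_assoc]
      rw [hev.deriv_eq]
      have hG : HasDerivAt (intK μ X (d-1-j) j)
          (-((d-1-j:ℕ):ℝ) * intK μ X (d-1-j-1) (j+1) y) y :=
        hasDerivAt_intK μ X hX hX0 hy hm j
      rw [(hG.const_mul ((-1:ℝ)^j * ((d-1).descFactorial j : ℝ))).deriv]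
      rw [show d - 1 - j - 1 = d - 1 - (j+1) by omega] at hG ⊢
      rw [Nat.descFactorial_succ, Nat.cast_mul]
      ring
  -- Step 2: the right-hand derivative of order d-1
  have hlast : derivWithin (iteratedDeriv (d-2) f) (Set.Ici x) x
      = ((-1:ℝ)^(d-2) * ((d-1).descFactorial (d-2) : ℝ)) * (-(1:ℝ) * intK μ X 0 (d-1) x) := by
    have heq : Set.EqOn (iteratedDeriv (d-2) f)
        (fun z => ((-1:ℝ)^(d-2) * ((d-1).descFactorial (d-2):ℝ)) * intK μ X (d-1-(d-2)) (d-2) z)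
        (Set.Ici x) := fun y hy => by
      simp only
      rw [hiter (d-2) le_rfl y (lt_of_lt_of_le hx hy), mul_assoc]
    rw [derivWithin_congr heq (heq Set.self_mem_Ici)]
    have h1 : d - 1 - (d-2) = 1 := by omega
    rw [h1]
    have hW : HasDerivWithinAt (intK μ X 1 (d-2)) (-(1:ℝ) * intK μ X 0 (d-2+1) x) (Ici x) x :=
      hasDerivWithinAt_intK_one μ X hX hX0 hx (d-2)
    rw [show d - 2 + 1 = d - 1 by omega] at hW
    exact (hW.const_mul _).derivWithin (uniqueDiffOn_Ici x x Set.self_mem_Ici)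
  -- Step 3: probability of the tail as an integral
  have hsetm : MeasurableSet {ω | x < X ω} := measurableSet_lt measurable_const hX
  have hμ : (μ {ω | X ω ≤ x}).toReal = 1 - (μ {ω | x < X ω}).toReal := by
    have hc : {ω | x < X ω}ᶜ = {ω | X ω ≤ x} := by
      ext ω; simp [not_lt]
    rw [← hc, prob_compl_eq_one_sub hsetm,
      ENNReal.toReal_sub_of_le prob_le_one ENNReal.one_ne_top, ENNReal.toReal_one]
  have hbinom : ∀ ω, (if x < X ω then (1:ℝ) else 0)
      = ∑ k ∈ Finset.range d, ((d-1).choose k : ℝ) * (x^k * kern (X ω) (d-1-k) k x) := by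
    intro ω
    rw [show Finset.range d = Finset.range (d-1+1) from by rw [Nat.sub_add_cancel (by omega)]]
    rcases lt_or_ge x (X ω) with hxt | htx
    · have ht0 : 0 < X ω := hx.trans hxt
      rw [if_pos hxt]
      have h1 : (1:ℝ) = (x / X ω + (1 - x / X ω))^(d-1) := by
        rw [show x / X ω + (1 - x / X ω) = 1 by ring, one_pow]
      rw [h1, add_pow]
      refine Finset.sum_congr rfl fun k hk => ?_
      rw [kern_of_lt hxt, div_pow]
      ring
    · rw [if_neg (not_lt.2 htx)]
      refine (Finset.sum_eq_zero fun k hk => ?_).symm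
      rw [kern_of_le htx]
      ring
  have hint : (μ {ω | x < X ω}).toReal
      = ∑ k ∈ Finset.range d, ((d-1).choose k : ℝ) * (x^k * intK μ X (d-1-k) k x) := by
    have h0 : (μ {ω | x < X ω}).toReal = ∫ ω, (if x < X ω then (1:ℝ) else 0) ∂μ := by
      have h1 := integral_indicator_const (E := ℝ) (1:ℝ) hsetm (μ := μ)
      rw [smul_eq_mul, mul_one, measureReal_def] at h1
      rw [← h1]
      refine integral_congr_ae (Eventually.of_forall fun ω => ?_)
      simp [Set.indicator_apply]
    rw [h0]
    have h1 : ∫ ω, (if x < X ω then (1:ℝ) else 0) ∂μ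
        = ∫ ω, ∑ k ∈ Finset.range d, ((d-1).choose k : ℝ) * (x^k * kern (X ω) (d-1-k) k x) ∂μ :=
      integral_congr_ae (Eventually.of_forall fun ω => hbinom ω)
    rw [h1, integral_finset_sum _ (fun k _ =>
      (((integrable_kern μ X hX hx (d-1-k) k).const_mul (x^k)).const_mul _))]
    refine Finset.sum_congr rfl fun k _ => ?_
    rw [integral_const_mul, integral_const_mul]
    rfl
  -- Step 4: assemble
  rw [hμ, hint, hlast]
  have hsum : ∑ k ∈ Finset.range (d-1), (-1:ℝ)^k * x^k * iteratedDeriv k f x / (k.factorial : ℝ)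
      = ∑ k ∈ Finset.range (d-1), ((d-1).choose k : ℝ) * (x^k * intK μ X (d-1-k) k x) := by
    refine Finset.sum_congr rfl fun k hk => ?_
    rw [Finset.mem_range] at hk
    rw [hiter k (by omega) x hx, Nat.descFactorial_eq_factorial_mul_choose, Nat.cast_mul]
    have hk0 : (k.factorial : ℝ) ≠ 0 := Nat.cast_ne_zero.2 k.factorial_ne_zero
    have he : ((-1:ℝ))^k * ((-1:ℝ))^k = 1 := by
      rw [← mul_pow]; norm_num
    set e := ((-1:ℝ))^k with hedef
    rw [div_eq_iff hk0]
    linear_combination (x^k * (k.factorial : ℝ) * ((d-1).choose k : ℝ)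
      * intK μ X (d-1-k) k x) * he
  rw [hsum]
  have hdf : ((d-1).descFactorial (d-2) : ℝ) = ((d-1).factorial : ℝ) := by
    congr 1
    rw [Nat.descFactorial_eq_factorial_mul_choose]
    have h2 : (d-1).choose (d-2) = d - 1 := by
      rw [show d - 2 = (d-1) - 1 by omega, Nat.choose_symm (by omega), Nat.choose_one_right]
    rw [h2, show d - 1 = (d-2) + 1 by omega, Nat.factorial_succ]
    ring
  rw [show Finset.range d = Finset.range (d-1+1) from by rw [Nat.sub_add_cancel (by omega)],
    Finset.sum_range_succ, Nat.choose_self, Nat.cast_one, one_mul, Nat.sub_self]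
  have hT : (-1:ℝ)^(d-1) * x^(d-1) * (((-1:ℝ)^(d-2) * ((d-1).descFactorial (d-2) : ℝ))
        * (-(1:ℝ) * intK μ X 0 (d-1) x)) / ((d-1).factorial : ℝ)
      = x^(d-1) * intK μ X 0 (d-1) x := by
    have hfac : ((d-1).factorial : ℝ) ≠ 0 := Nat.cast_ne_zero.2 (d-1).factorial_ne_zero
    rw [hdf] at *
    rw [show d - 1 = (d-2) + 1 by omega] at *
    rw [pow_succ, div_eq_iff hfac]
    have he : ((-1:ℝ))^(d-2) * ((-1:ℝ))^(d-2) = 1 := by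
      rw [← mul_pow]; norm_num
    set e := ((-1:ℝ))^(d-2) with hedef
    linear_combination (x^(d-2+1) * intK μ X 0 (d-2+1) x * (((d-2+1).factorial : ℝ))) * he
  rw [hT]
  ring

end
end

section
/- Let X = R·S_d where R is a nonnegative random variable with distribution function F_R, independent of S_d which is uniformly distributed on the unit simplex in ℝ₊^d. Then the survival function of X satisfies P(X > x) = 𝔚_d F_R(‖max(x,0)‖₁) + F_R(0)·1{x < 0} for all x ∈ ℝ^d, where 𝔚_d F_R is the Williamson d-transform of F_R. -/
open Set MeasureTheory ProbabilityTheory Filter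
open scoped Pointwise ENNReal NNReal

noncomputable section

/-- The uniform distribution on the unit simplex `{x ∈ ℝ₊^d : ‖x‖₁ = 1}`: the normalized
restriction of the `(d-1)`-dimensional Hausdorff measure to the simplex. -/
def uniformSimplex (d : ℕ) : Measure (Fin d → ℝ) :=
  ProbabilityTheory.cond (MeasureTheory.Measure.hausdorffMeasure ((d : ℝ) - 1))
    {x | (∀ i, 0 ≤ x i) ∧ ∑ i, x i = 1}

namespace Stmt9Aux

variable {d : ℕ}

def T (d : ℕ) : Set (Fin d → ℝ) := {x | (∀ i, 0 ≤ x i) ∧ ∑ i, x i = 1}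

def Q (t : Fin d → ℝ) : Set (Fin d → ℝ) := {s | (∀ i, t i < s i) ∧ ∑ i, s i = 1}

lemma measurableSet_T : MeasurableSet (T d) := by
  have h1 : MeasurableSet {x : Fin d → ℝ | ∀ i, 0 ≤ x i} := by
    rw [setOf_forall]
    exact MeasurableSet.iInter fun i => measurableSet_le measurable_const (measurable_pi_apply i)
  have h2 : MeasurableSet {x : Fin d → ℝ | ∑ i, x i = 1} :=
    measurableSet_eq_fun (by measurability) measurable_const
  exact h1.inter h2

lemma measurableSet_Q (t : Fin d → ℝ) : MeasurableSet (Q t) := by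
  have h1 : MeasurableSet {x : Fin d → ℝ | ∀ i, t i < x i} := by
    rw [setOf_forall]
    exact MeasurableSet.iInter fun i => measurableSet_lt measurable_const (measurable_pi_apply i)
  have h2 : MeasurableSet {x : Fin d → ℝ | ∑ i, x i = 1} :=
    measurableSet_eq_fun (by measurability) measurable_const
  exact h1.inter h2

lemma Q_subset_T {t : Fin d → ℝ} (ht : ∀ i, 0 ≤ t i) : Q t ⊆ T d :=
  fun s hs => ⟨fun i => ((ht i).trans_lt (hs.1 i)).le, hs.2⟩

lemma Q_empty (hd : 0 < d) {t : Fin d → ℝ} (h : 1 ≤ ∑ i, t i) : Q t = ∅ := by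
  ext s
  simp only [Q, mem_setOf_eq, mem_empty_iff_false, iff_false, not_and]
  intro hs hsum
  have : ∑ i, t i < ∑ i, s i := by
    refine Finset.sum_lt_sum_of_nonempty ?_ fun i _ => hs i
    exact Finset.univ_nonempty_iff.2 (Fin.pos_iff_nonempty.mp hd)
  rw [hsum] at this
  exact absurd (h.trans_lt this) (lt_irrefl 1)

lemma Q_image {t : Fin d → ℝ} (hc : ∑ i, t i < 1) :
    Q t = (fun s => t + (1 - ∑ i, t i) • s) '' Q (0 : Fin d → ℝ) := by
  set c : ℝ := 1 - ∑ i, t i with hcdef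
  have hc0 : 0 < c := by simp [hcdef]; linarith
  ext s
  constructor
  · rintro ⟨hlt, hsum⟩
    refine ⟨c⁻¹ • (s - t), ⟨fun i => ?_, ?_⟩, ?_⟩
    · simp only [Pi.smul_apply, Pi.sub_apply, Pi.zero_apply, smul_eq_mul]
      have := sub_pos.2 (hlt i)
      positivity
    · simp only [Pi.smul_apply, Pi.sub_apply, smul_eq_mul]
      rw [← Finset.mul_sum, Finset.sum_sub_distrib, hsum]
      field_simp
      simp [hcdef]
    · funext i
      simp only [Pi.add_apply, Pi.smul_apply, Pi.sub_apply, smul_eq_mul]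
      field_simp
      ring
  · rintro ⟨u, ⟨hu, husum⟩, rfl⟩
    constructor
    · intro i
      simp only [Pi.add_apply, Pi.smul_apply, smul_eq_mul]
      have := hu i
      simp only [Pi.zero_apply] at this
      nlinarith
    · simp only [Pi.add_apply, Pi.smul_apply, smul_eq_mul]
      rw [Finset.sum_add_distrib, ← Finset.mul_sum, husum]
      ring

lemma measure_affine (hd : 1 ≤ d) {c : ℝ} (hc0 : 0 < c) (v : Fin d → ℝ)
    (A : Set (Fin d → ℝ)) :
    μH[(d : ℝ) - 1] ((fun s => v + c • s) '' A) =
      ENNReal.ofReal (c ^ (d - 1)) * μH[(d : ℝ) - 1] A := by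
  have hdim : (0:ℝ) ≤ (d : ℝ) - 1 := by
    have : (1:ℝ) ≤ (d:ℝ) := by exact_mod_cast hd
    linarith
  have himg : (fun s => v + c • s) '' A = v +ᵥ (c • A) := by
    ext s
    simp only [mem_image, Set.mem_vadd_set, Set.mem_smul_set]
    constructor
    · rintro ⟨u, hu, rfl⟩; exact ⟨c • u, ⟨u, hu, rfl⟩, by simp [vadd_eq_add]⟩
    · rintro ⟨w, ⟨u, hu, rfl⟩, rfl⟩; exact ⟨u, hu, by simp [vadd_eq_add]⟩
  rw [himg, MeasureTheory.hausdorffMeasure_vadd _ (Or.inl hdim) _,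
    Measure.hausdorffMeasure_smul₀ hdim hc0.ne' A]
  have hcast : ((d : ℝ) - 1) = ((d - 1 : ℕ) : ℝ) := by
    rw [Nat.cast_sub hd, Nat.cast_one]
  have key : (‖c‖₊ ^ ((d:ℝ)-1) : ℝ≥0) = Real.toNNReal (c ^ (d - 1)) := by
    rw [hcast, NNReal.rpow_natCast, Real.toNNReal_pow hc0.le]
    congr 1
    exact (Real.toNNReal_eq_nnnorm_of_nonneg hc0.le).symm ▸ rfl
  rw [ENNReal.smul_def, smul_eq_mul]
  congr 1
  rw [ENNReal.ofReal, ← key]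

lemma measure_Q_smul (hd : 1 ≤ d) {t : Fin d → ℝ} (hc : ∑ i, t i < 1) :
    μH[(d : ℝ) - 1] (Q t) =
      ENNReal.ofReal ((1 - ∑ i, t i) ^ (d - 1)) * μH[(d : ℝ) - 1] (Q (0 : Fin d → ℝ)) := by
  have hc0 : (0:ℝ) < 1 - ∑ i, t i := by linarith
  rw [Q_image hc, measure_affine hd hc0]

lemma slice_image {a : ℝ} (ha0 : 0 ≤ a) (ha1 : a < 1) (j : Fin d) :
    {s | s ∈ T d ∧ s j = a} =
      (fun s => Pi.single j a + (1 - a) • s) '' {s | s ∈ T d ∧ s j = 0} := by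
  have hsum_single : ∑ i, Pi.single j a i = a := Finset.sum_pi_single' j a Finset.univ |>.trans
    (by simp)
  have hc0 : (0:ℝ) < 1 - a := by linarith
  ext s
  constructor
  · rintro ⟨⟨hpos, hsum⟩, hj⟩
    refine ⟨(1 - a)⁻¹ • (s - Pi.single j a), ⟨⟨fun i => ?_, ?_⟩, ?_⟩, ?_⟩
    · simp only [Pi.smul_apply, Pi.sub_apply, smul_eq_mul]
      rcases eq_or_ne i j with rfl | hij
      · simp [hj]
      · simp only [Pi.single_apply, if_neg hij, sub_zero]
        have := hpos i
        positivity
    · simp only [Pi.smul_apply, Pi.sub_apply, smul_eq_mul]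
      rw [← Finset.mul_sum, Finset.sum_sub_distrib, hsum, hsum_single]
      field_simp
    · simp only [Pi.smul_apply, Pi.sub_apply, smul_eq_mul, Pi.single_eq_same, hj]
      ring
    · funext i
      simp only [Pi.add_apply, Pi.smul_apply, Pi.sub_apply, smul_eq_mul]
      field_simp
      ring
  · rintro ⟨u, ⟨⟨hpos, hsum⟩, hj⟩, rfl⟩
    refine ⟨⟨fun i => ?_, ?_⟩, ?_⟩
    · simp only [Pi.add_apply, Pi.smul_apply, smul_eq_mul, Pi.single_apply]
      have h1 : 0 ≤ (1 - a) * u i := mul_nonneg hc0.le (hpos i)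
      split_ifs with h
      · linarith
      · linarith
    · simp only [Pi.add_apply, Pi.smul_apply, smul_eq_mul]
      rw [Finset.sum_add_distrib, ← Finset.mul_sum, hsum, hsum_single]
      ring
    · simp [hj]

lemma measure_face_zero (hd : 1 ≤ d) (htop : μH[(d : ℝ) - 1] (T d) ≠ ⊤) (j : Fin d) :
    μH[(d : ℝ) - 1] {s | s ∈ T d ∧ s j = 0} = 0 := by
  by_contra hm
  set H : Measure (Fin d → ℝ) := μH[(d : ℝ) - 1] with hH
  set m := H {s | s ∈ T d ∧ s j = 0} with hmd
  set a : ℕ → ℝ := fun n => ((n : ℝ) + 2)⁻¹ with ha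
  have ha0 : ∀ n, 0 ≤ a n := fun n => by positivity
  have ha1 : ∀ n, a n < 1 := fun n => by
    rw [ha]
    have : (1:ℝ) < (n:ℝ) + 2 := by linarith [Nat.cast_nonneg (α := ℝ) n]
    simpa using inv_lt_one_of_one_lt₀ this
  have hahalf : ∀ n, a n ≤ 2⁻¹ := fun n => by
    rw [ha]
    apply inv_anti₀ (by norm_num)
    have : (0:ℝ) ≤ (n:ℝ) := n.cast_nonneg
    linarith
  set G : ℕ → Set (Fin d → ℝ) := fun n => {s | s ∈ T d ∧ s j = a n} with hG
  have hGm : ∀ n, MeasurableSet (G n) := fun n =>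
    measurableSet_T.inter (measurableSet_eq_fun (measurable_pi_apply j) measurable_const)
  have hGsub : ∀ n, G n ⊆ T d := fun n s hs => hs.1
  have hGdisj : Pairwise (Function.onFun Disjoint G) := by
    intro n k hnk
    refine Set.disjoint_left.2 fun s hsn hsk => hnk ?_
    have h1 : ((n:ℝ)+2)⁻¹ = ((k:ℝ)+2)⁻¹ := by
      have := hsn.2.symm.trans hsk.2
      simpa [ha] using this
    have h3 := inv_injective h1
    have h2 : ((n:ℝ)) = (k:ℝ) := by linarith
    exact_mod_cast h2
  have hGmeas : ∀ n, H (G n) = ENNReal.ofReal ((1 - a n) ^ (d - 1)) * m := fun n => by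
    rw [hG]
    simp only
    rw [slice_image (ha0 n) (ha1 n) j, hH, measure_affine hd (by linarith [ha1 n])]
  set δ : ℝ≥0∞ := ENNReal.ofReal ((2⁻¹ : ℝ) ^ (d - 1)) * m with hδ
  have hδ0 : δ ≠ 0 := by
    apply mul_ne_zero _ hm
    simp only [ne_eq, ENNReal.ofReal_eq_zero, not_le]
    positivity
  have hle : ∀ n, δ ≤ H (G n) := fun n => by
    rw [hGmeas n, hδ]
    apply mul_le_mul_left
    apply ENNReal.ofReal_le_ofReal
    apply pow_le_pow_left₀ (by norm_num)
    linarith [hahalf n]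
  have htot : (⊤ : ℝ≥0∞) ≤ H (⋃ n, G n) := by
    rw [measure_iUnion hGdisj hGm]
    calc (⊤ : ℝ≥0∞) = ∑' _ : ℕ, δ := (ENNReal.tsum_const_eq_top_of_ne_zero hδ0).symm
    _ ≤ ∑' n, H (G n) := ENNReal.tsum_le_tsum hle
  have : H (⋃ n, G n) ≤ H (T d) := measure_mono (iUnion_subset hGsub)
  exact htop (top_le_iff.1 (htot.trans this))

lemma measure_T_diff_Q0 (hd : 1 ≤ d) (htop : μH[(d : ℝ) - 1] (T d) ≠ ⊤) :
    μH[(d : ℝ) - 1] (T d \ Q (0 : Fin d → ℝ)) = 0 := by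
  have hsub : T d \ Q (0 : Fin d → ℝ) ⊆ ⋃ j, {s | s ∈ T d ∧ s j = 0} := by
    rintro s ⟨⟨hpos, hsum⟩, hnq⟩
    simp only [Q, mem_setOf_eq, not_and, Pi.zero_apply] at hnq
    have : ¬ ∀ i, 0 < s i := fun h => (hnq h) hsum
    push_neg at this
    obtain ⟨i, hi⟩ := this
    exact mem_iUnion.2 ⟨i, ⟨⟨hpos, hsum⟩, le_antisymm hi (hpos i)⟩⟩
  exact measure_mono_null hsub (measure_iUnion_null fun j => measure_face_zero hd htop j)

lemma measure_Q0 (hd : 1 ≤ d) (htop : μH[(d : ℝ) - 1] (T d) ≠ ⊤) :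
    μH[(d : ℝ) - 1] (Q (0 : Fin d → ℝ)) = μH[(d : ℝ) - 1] (T d) := by
  refine le_antisymm (measure_mono (Q_subset_T fun i => le_rfl)) ?_
  calc μH[(d : ℝ) - 1] (T d)
      ≤ μH[(d : ℝ) - 1] (Q (0 : Fin d → ℝ) ∪ (T d \ Q (0 : Fin d → ℝ))) :=
        measure_mono fun s hs => by
          by_cases h : s ∈ Q (0 : Fin d → ℝ)
          · exact Or.inl h
          · exact Or.inr ⟨hs, h⟩
    _ ≤ μH[(d : ℝ) - 1] (Q (0 : Fin d → ℝ)) + μH[(d : ℝ) - 1] (T d \ Q (0 : Fin d → ℝ)) :=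
        measure_union_le _ _
    _ = μH[(d : ℝ) - 1] (Q (0 : Fin d → ℝ)) := by rw [measure_T_diff_Q0 hd htop, add_zero]


lemma uniformSimplex_apply {A : Set (Fin d → ℝ)} (hA : MeasurableSet A) :
    uniformSimplex d A = (μH[(d : ℝ) - 1] (T d))⁻¹ * μH[(d : ℝ) - 1] (A ∩ T d) := by
  rw [uniformSimplex, ProbabilityTheory.cond, Measure.smul_apply, Measure.restrict_apply hA,
    smul_eq_mul]
  rfl

lemma measurableSet_A (x : Fin d → ℝ) (r : ℝ) :
    MeasurableSet {s : Fin d → ℝ | ∀ i, x i < r * s i} := by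
  rw [setOf_forall]
  exact MeasurableSet.iInter fun i =>
    measurableSet_lt measurable_const (measurable_const.mul (measurable_pi_apply i))

lemma survival (hd : 1 ≤ d) (h0 : μH[(d : ℝ) - 1] (T d) ≠ 0)
    (htop : μH[(d : ℝ) - 1] (T d) ≠ ⊤) (x : Fin d → ℝ) {r : ℝ} (hr : 0 < r) :
    uniformSimplex d {s | ∀ i, x i < r * s i} =
      if (∑ i, max (x i) 0) < r then
        ENNReal.ofReal ((1 - (∑ i, max (x i) 0) / r) ^ (d - 1))
      else 0 := by
  rw [uniformSimplex_apply (measurableSet_A x r)]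
  set t : Fin d → ℝ := fun i => max (x i) 0 / r with htdef
  have ht0 : ∀ i, 0 ≤ t i := fun i => div_nonneg (le_max_right _ _) hr.le
  have htsum : ∑ i, t i = (∑ i, max (x i) 0) / r := (Finset.sum_div _ _ _).symm
  have hsub1 : Q t ⊆ {s | ∀ i, x i < r * s i} ∩ T d := by
    intro s hs
    refine ⟨fun i => ?_, Q_subset_T ht0 hs⟩
    have h1 : max (x i) 0 / r < s i := hs.1 i
    have h2 : max (x i) 0 < s i * r := (div_lt_iff₀ hr).1 h1
    calc x i ≤ max (x i) 0 := le_max_left _ _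
      _ < s i * r := h2
      _ = r * s i := mul_comm _ _
  have hsub2 : {s | ∀ i, x i < r * s i} ∩ T d ⊆ Q t ∪ (T d \ Q (0 : Fin d → ℝ)) := by
    rintro s ⟨hslt, hsT⟩
    by_cases hq : s ∈ Q (0 : Fin d → ℝ)
    · left
      refine ⟨fun i => ?_, hsT.2⟩
      rcases le_or_gt (x i) 0 with hx | hx
      · have h1 : t i = 0 := by rw [htdef]; simp only [max_eq_right hx, zero_div]
        have h2 : (0 : ℝ) < s i := by simpa using hq.1 i
        rw [h1]; exact h2
      · have h1 : t i = x i / r := by rw [htdef]; simp only [max_eq_left hx.le]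
        rw [h1]
        exact (div_lt_iff₀ hr).2 (by rw [mul_comm]; exact hslt i)
    · right; exact ⟨hsT, hq⟩
  have hmeasAT : μH[(d : ℝ) - 1] ({s | ∀ i, x i < r * s i} ∩ T d) = μH[(d : ℝ) - 1] (Q t) := by
    refine le_antisymm ?_ (measure_mono hsub1)
    calc μH[(d : ℝ) - 1] ({s | ∀ i, x i < r * s i} ∩ T d)
        ≤ μH[(d : ℝ) - 1] (Q t ∪ (T d \ Q (0 : Fin d → ℝ))) := measure_mono hsub2
      _ ≤ μH[(d : ℝ) - 1] (Q t) + μH[(d : ℝ) - 1] (T d \ Q (0 : Fin d → ℝ)) :=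
          measure_union_le _ _
      _ = μH[(d : ℝ) - 1] (Q t) := by rw [measure_T_diff_Q0 hd htop, add_zero]
  rw [hmeasAT]
  rcases lt_or_ge (∑ i, max (x i) 0) r with hlt | hge
  · rw [if_pos hlt]
    have hts : ∑ i, t i < 1 := by rw [htsum]; exact (div_lt_one hr).2 hlt
    rw [measure_Q_smul hd hts, measure_Q0 hd htop, htsum, mul_comm (ENNReal.ofReal _) _,
      ← mul_assoc, ENNReal.inv_mul_cancel h0 htop, one_mul]
  · rw [if_neg (not_lt.2 hge), Q_empty hd ?_, measure_empty, mul_zero]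
    rw [htsum]
    exact (one_le_div hr).2 hge

end Stmt9Aux

open Stmt9Aux in
/-- Survival function of an `ℓ₁`-norm symmetric distribution `X = R·S_d`:
`P(X > x) = 𝔚_d F_R(‖max(x,0)‖₁) + F_R(0)·1{x < 0}`, where the Williamson `d`-transform
of `F_R` at `t` is written as the expectation `E[(1 - t/R)₊^(d-1) 1{R > t}]`. -/
theorem stmt9 {Ω : Type*} [MeasurableSpace Ω] (μ : Measure Ω) [IsProbabilityMeasure μ]
    (d : ℕ) (hd : 2 ≤ d) (R : Ω → ℝ) (S : Ω → Fin d → ℝ)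
    (hRm : Measurable R) (hSm : Measurable S) (hR0 : ∀ ω, 0 ≤ R ω)
    (hSlaw : μ.map S = uniformSimplex d)
    (hind : ProbabilityTheory.IndepFun R S μ) :
    ∀ x : Fin d → ℝ,
      (μ {ω | ∀ i, x i < R ω * S ω i}).toReal =
        (∫ ω, (if (∑ i, max (x i) 0) < R ω
            then (1 - (∑ i, max (x i) 0) / R ω) ^ (d - 1) else 0) ∂μ)
        + (μ {ω | R ω ≤ 0}).toReal * (if ∀ i, x i < 0 then 1 else 0) := by
  intro x
  set a : ℝ := ∑ i, max (x i) 0 with hadef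
  have ha0 : 0 ≤ a := Finset.sum_nonneg fun i _ => le_max_right _ _
  have hd1 : 1 ≤ d := le_trans (by norm_num) hd
  have hSprob : IsProbabilityMeasure (μ.map S) := Measure.isProbabilityMeasure_map hSm.aemeasurable
  haveI husProb : IsProbabilityMeasure (uniformSimplex d) := hSlaw ▸ hSprob
  have hν1 : uniformSimplex d Set.univ = 1 := measure_univ
  have h0 : μH[(d : ℝ) - 1] (T d) ≠ 0 := by
    intro h
    rw [uniformSimplex_apply MeasurableSet.univ, Set.univ_inter, h, mul_zero] at hν1
    exact one_ne_zero hν1.symm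
  have htop : μH[(d : ℝ) - 1] (T d) ≠ ⊤ := by
    intro h
    rw [uniformSimplex_apply MeasurableSet.univ, Set.univ_inter, h, ENNReal.inv_top,
      zero_mul] at hν1
    exact one_ne_zero hν1.symm
  -- Step 1 : reduce to a lintegral over the law of R
  have hP : MeasurableSet {p : ℝ × (Fin d → ℝ) | ∀ i, x i < p.1 * p.2 i} := by
    rw [setOf_forall]
    exact MeasurableSet.iInter fun i =>
      measurableSet_lt measurable_const
        (measurable_fst.mul ((measurable_pi_apply i).comp measurable_snd))
  have hpair : μ.map (fun ω => (R ω, S ω)) = (μ.map R).prod (μ.map S) :=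
    (indepFun_iff_map_prod_eq_prod_map_map hRm.aemeasurable hSm.aemeasurable).1 hind
  have hg : Measurable fun r : ℝ =>
      uniformSimplex d (Prod.mk r ⁻¹' {p : ℝ × (Fin d → ℝ) | ∀ i, x i < p.1 * p.2 i}) :=
    measurable_measure_prodMk_left hP
  have hE : μ {ω | ∀ i, x i < R ω * S ω i}
      = ∫⁻ ω, uniformSimplex d {s | ∀ i, x i < R ω * s i} ∂μ := by
    have h1 : μ {ω | ∀ i, x i < R ω * S ω i}
        = μ.map (fun ω => (R ω, S ω)) {p | ∀ i, x i < p.1 * p.2 i} := by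
      rw [Measure.map_apply (hRm.prodMk hSm) hP]
      rfl
    rw [h1, hpair, hSlaw, Measure.prod_apply hP, lintegral_map hg hRm]
    exact lintegral_congr fun ω => rfl
  -- pointwise splitting
  have hgsplit : ∀ ω, uniformSimplex d {s | ∀ i, x i < R ω * s i}
      = (if a < R ω then ENNReal.ofReal ((1 - a / R ω) ^ (d - 1)) else 0)
        + Set.indicator {ω | R ω ≤ 0}
            (fun _ => if ∀ i, x i < 0 then (1 : ℝ≥0∞) else 0) ω := by
    intro ω
    rcases (hR0 ω).lt_or_eq with hpos | heq
    · rw [survival hd1 h0 htop x hpos,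
        Set.indicator_of_notMem (by simpa using not_le.2 hpos), add_zero]
    · have hx0 : ¬ a < R ω := by rw [← heq]; exact not_lt.2 ha0
      have hmem : ω ∈ {ω | R ω ≤ 0} := by simp [← heq]
      rw [if_neg hx0, zero_add, Set.indicator_of_mem hmem]
      have hset : {s : Fin d → ℝ | ∀ i, x i < R ω * s i} = {s : Fin d → ℝ | ∀ i, x i < 0} := by
        ext s; simp [← heq]
      rw [hset]
      by_cases hx : ∀ i, x i < 0
      · have h2 : {s : Fin d → ℝ | ∀ i, x i < 0} = Set.univ := eq_univ_of_forall fun s => hx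
        rw [h2, hν1, if_pos hx]
      · have h2 : {s : Fin d → ℝ | ∀ i, x i < 0} = ∅ :=
          eq_empty_iff_forall_notMem.2 fun s hs => hx hs
        rw [h2, measure_empty, if_neg hx]
  have hsetR : MeasurableSet {ω | R ω ≤ 0} := hRm measurableSet_Iic
  have hf1m : Measurable fun ω => (if a < R ω then
      ENNReal.ofReal ((1 - a / R ω) ^ (d - 1)) else (0:ℝ≥0∞)) := by
    refine Measurable.ite (hRm measurableSet_Ioi) ?_ measurable_const
    exact ENNReal.measurable_ofReal.comp (((measurable_const.div hRm).const_sub 1).pow_const _)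
  have hEsplit : μ {ω | ∀ i, x i < R ω * S ω i}
      = (∫⁻ ω, (if a < R ω then ENNReal.ofReal ((1 - a / R ω) ^ (d - 1)) else 0) ∂μ)
        + (if ∀ i, x i < 0 then (1 : ℝ≥0∞) else 0) * μ {ω | R ω ≤ 0} := by
    rw [hE, lintegral_congr hgsplit, lintegral_add_left hf1m,
      lintegral_indicator hsetR _, setLIntegral_const]
  -- finiteness
  have hf1le : ∀ ω, (if a < R ω then
      ENNReal.ofReal ((1 - a / R ω) ^ (d - 1)) else (0:ℝ≥0∞)) ≤ 1 := by
    intro ω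
    split_ifs with h
    · have hr : 0 < R ω := ha0.trans_lt h
      have h1 : a / R ω < 1 := (div_lt_one hr).2 h
      have h2 : 0 ≤ a / R ω := div_nonneg ha0 hr.le
      calc ENNReal.ofReal ((1 - a / R ω) ^ (d - 1)) ≤ ENNReal.ofReal 1 :=
            ENNReal.ofReal_le_ofReal (pow_le_one₀ (by linarith) (by linarith))
        _ = 1 := ENNReal.ofReal_one
    · exact zero_le_one
  have hf1fin : (∫⁻ ω, (if a < R ω then
      ENNReal.ofReal ((1 - a / R ω) ^ (d - 1)) else (0:ℝ≥0∞)) ∂μ) ≠ ⊤ := by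
    refine ne_top_of_le_ne_top (by simp : (1 : ℝ≥0∞) ≠ ⊤) ?_
    calc (∫⁻ ω, _ ∂μ) ≤ ∫⁻ _, 1 ∂μ := lintegral_mono hf1le
      _ = 1 := by simp
  have h2fin : (if ∀ i, x i < 0 then (1 : ℝ≥0∞) else 0) * μ {ω | R ω ≤ 0} ≠ ⊤ := by
    apply ENNReal.mul_ne_top
    · split_ifs <;> simp
    · exact (measure_lt_top μ _).ne
  -- real integral
  have hFinteq : ∫ ω, (if a < R ω then (1 - a / R ω) ^ (d - 1) else 0) ∂μ
      = (∫⁻ ω, (if a < R ω then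
          ENNReal.ofReal ((1 - a / R ω) ^ (d - 1)) else (0:ℝ≥0∞)) ∂μ).toReal := by
    have hFnn : 0 ≤ᵐ[μ] fun ω => (if a < R ω then (1 - a / R ω) ^ (d - 1) else (0:ℝ)) := by
      refine Filter.Eventually.of_forall fun ω => ?_
      simp only [Pi.zero_apply]
      split_ifs with h
      · have hr : 0 < R ω := ha0.trans_lt h
        have h1 : a / R ω < 1 := (div_lt_one hr).2 h
        have h2 : (0:ℝ) ≤ 1 - a / R ω := by linarith
        positivity
      · exact le_rfl
    have hFm : Measurable fun ω => (if a < R ω then (1 - a / R ω) ^ (d - 1) else (0:ℝ)) := by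
      refine Measurable.ite (hRm measurableSet_Ioi) ?_ measurable_const
      exact ((measurable_const.div hRm).const_sub 1).pow_const _
    rw [MeasureTheory.integral_eq_lintegral_of_nonneg_ae hFnn hFm.aestronglyMeasurable]
    congr 1
    apply lintegral_congr
    intro ω
    split_ifs with h
    · rfl
    · exact ENNReal.ofReal_zero
  -- put everything together
  rw [hEsplit, ENNReal.toReal_add hf1fin h2fin, hFinteq, ENNReal.toReal_mul]
  congr 1
  rw [mul_comm]
  congr 1
  split_ifs with h
  · exact ENNReal.toReal_one
  · exact ENNReal.toReal_zero
end
end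

section
/- Let 0 < a < b and f_{a,b}(x) = (ab/(b-a)) x^{-2} on [a,b] (zero elsewhere), the density of the reciprocal of a Uniform[b⁻¹, a⁻¹] random variable. Then the Williamson d-transform of this distribution is ψ_{a,b}(x) = (ab/(x d (b-a))) · [(1 - x/b)₊^d - (1 - x/a)₊^d] for x > 0, with ψ_{a,b}(0) = 1. -/
open Set MeasureTheory ProbabilityTheory Filter

noncomputable section

lemma aux_deriv (d : ℕ) (hd : 2 ≤ d) (x : ℝ) (hx : 0 < x) {t : ℝ} (ht : 0 < t) :
    HasDerivAt (fun s => max (1 - x / s) 0 ^ d)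
      (d * (x / t ^ 2) * max (1 - x / t) 0 ^ (d - 1)) t := by
  rcases lt_trichotomy t x with h | h | h
  · -- t < x : locally zero
    have hmax : max (1 - x / t) 0 = 0 := max_eq_right (by
      have : 1 < x / t := (one_lt_div ht).2 h
      linarith)
    rw [hmax, zero_pow (by omega), mul_zero]
    apply (hasDerivAt_const t (0:ℝ)).congr_of_eventuallyEq
    filter_upwards [Ioo_mem_nhds ht h] with s hs
    have : 1 < x / s := (one_lt_div hs.1).2 hs.2
    rw [max_eq_right (by linarith), zero_pow (by omega)]
  · -- t = x : slope argument
    subst h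
    have hmax : max (1 - t / t) 0 = 0 := by simp [div_self ht.ne']
    rw [hmax, zero_pow (by omega), mul_zero]
    rw [hasDerivAt_iff_tendsto_slope]
    have hb : ∀ᶠ s in nhdsWithin t {t}ᶜ,
        ‖slope (fun s => max (1 - t / s) 0 ^ d) t s‖ ≤ |s - t| / (t/2)^2 := by
      filter_upwards [nhdsWithin_le_nhds (Ioo_mem_nhds (by linarith : t/2 < t) (lt_add_one t)),
        self_mem_nhdsWithin] with s hs hs'
      have hst : s ≠ t := hs'
      have habs : 0 < |s - t| := abs_pos.2 (sub_ne_zero.2 hst)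
      have hs0 : 0 < s := lt_trans (by linarith) hs.1
      set g := max (1 - t / s) 0 with hg
      have hg0 : (0:ℝ) ≤ g := le_max_right _ _
      have hg1 : g ≤ 1 := by
        have : 0 < t / s := div_pos ht hs0
        exact max_le (by linarith) zero_le_one
      have hgd : g ^ d ≤ g ^ 2 := pow_le_pow_of_le_one hg0 hg1 hd
      have hg2 : g ≤ |s - t| / s := by
        apply max_le _ (by positivity)
        rw [le_div_iff₀ hs0]
        have h1 : (1 - t/s) * s = s - t := by field_simp
        rw [h1]
        exact le_abs_self _
      have key : g ^ d * s ^ 2 ≤ (s - t) ^ 2 := by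
        have h2 : g ^ 2 ≤ (s-t)^2 / s^2 := by
          have := pow_le_pow_left₀ hg0 hg2 2
          calc g^2 ≤ (|s-t|/s)^2 := this
            _ = (s-t)^2/s^2 := by rw [div_pow, sq_abs]
        have h3 : g^2 * s^2 ≤ (s-t)^2 := by
          rw [← le_div_iff₀ (by positivity)]; exact h2
        nlinarith [sq_nonneg s]
      have hslope : slope (fun s => max (1 - t / s) 0 ^ d) t s = g ^ d / (s - t) := by
        rw [slope_def_field, hmax, zero_pow (by omega), sub_zero, hg]
      rw [hslope, norm_div, Real.norm_eq_abs, Real.norm_eq_abs,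
        abs_of_nonneg (pow_nonneg hg0 d)]
      rw [div_le_div_iff₀ habs (by positivity)]
      have h3 : (t/2)^2 ≤ s^2 := by nlinarith [hs.1]
      have h4 : |s - t| * |s - t| = (s-t)^2 := by rw [abs_mul_abs_self]; ring
      nlinarith [pow_nonneg hg0 d, key]
    have hlim : Tendsto (fun s => |s - t| / (t/2)^2) (nhdsWithin t {t}ᶜ) (nhds 0) := by
      have hc : Continuous (fun s : ℝ => |s - t| / (t/2)^2) := by fun_prop
      have : Tendsto (fun s => |s - t| / (t/2)^2) (nhds t) (nhds 0) := by
        simpa using hc.tendsto t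
      exact this.mono_left nhdsWithin_le_nhds
    exact squeeze_zero_norm' hb hlim
  · -- t > x : locally equal to (1 - x/s)^d
    have hD : HasDerivAt (fun s : ℝ => 1 - x / s) (x / t ^ 2) t := by
      have h1 : HasDerivAt (fun s : ℝ => x / s) (-(x / t ^ 2)) t := by
        simpa [div_eq_mul_inv, mul_neg] using (hasDerivAt_inv (ne_of_gt ht)).const_mul x
      simpa using h1.const_sub 1
    have hmax : max (1 - x / t) 0 = 1 - x / t := by
      have : x / t < 1 := (div_lt_one ht).2 h
      exact max_eq_left (by linarith)
    rw [hmax]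
    have h2 : HasDerivAt (fun s : ℝ => (1 - x / s) ^ d)
        (↑d * (x / t ^ 2) * (1 - x / t) ^ (d - 1)) t := by
      convert hD.fun_pow d using 1 <;> first | rfl | ring
    apply h2.congr_of_eventuallyEq
    filter_upwards [Ioi_mem_nhds h] with s hs
    have hs0 : 0 < s := lt_trans hx hs
    have : x / s < 1 := (div_lt_one hs0).2 hs
    rw [max_eq_left (by linarith)]

/-- The Williamson `d`-transform of the distribution with density
`f_{a,b}(t) = (ab/(b-a)) t⁻²` on `[a,b]` (the reciprocal of a `Uniform[1/b, 1/a]` variable)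
is `ψ_{a,b}(x) = (ab/(x d (b-a)))·((1 - x/b)₊^d - (1 - x/a)₊^d)` for `x > 0`, and
`ψ_{a,b}(0) = 1` (the density integrates to one). -/
theorem stmt14 (d : ℕ) (hd : 2 ≤ d) (a b : ℝ) (ha : 0 < a) (hab : a < b) :
    (∀ x : ℝ, 0 < x →
      ∫ t in Set.Icc a b, a * b / (b - a) / t ^ 2 * max (1 - x / t) 0 ^ (d - 1)
        = a * b / (x * d * (b - a)) *
            (max (1 - x / b) 0 ^ d - max (1 - x / a) 0 ^ d)) ∧
    ∫ t in Set.Icc a b, a * b / (b - a) / t ^ 2 = 1 := by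
  have hba : (0:ℝ) < b - a := sub_pos.2 hab
  have hb : 0 < b := lt_trans ha hab
  have hd0 : (d:ℝ) ≠ 0 := Nat.cast_ne_zero.2 (by omega)
  have ht0 : ∀ t ∈ Set.Icc a b, t ≠ 0 := fun t ht => (lt_of_lt_of_le ha ht.1).ne'
  constructor
  · intro x hx
    have hIcc : (∫ t in Set.Icc a b, a * b / (b - a) / t ^ 2 * max (1 - x / t) 0 ^ (d - 1))
        = ∫ t in a..b, a * b / (b - a) / t ^ 2 * max (1 - x / t) 0 ^ (d - 1) := by
      rw [intervalIntegral.integral_of_le hab.le, ← MeasureTheory.integral_Icc_eq_integral_Ioc]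
    rw [hIcc]
    have hFTC : ∫ t in a..b, a * b / (b - a) / t ^ 2 * max (1 - x / t) 0 ^ (d - 1)
        = a * b / (b - a) / (x * d) * max (1 - x / b) 0 ^ d
          - a * b / (b - a) / (x * d) * max (1 - x / a) 0 ^ d := by
      refine intervalIntegral.integral_eq_sub_of_hasDerivAt
        (f := fun t => a * b / (b - a) / (x * d) * max (1 - x / t) 0 ^ d)
        (f' := fun t => a * b / (b - a) / t ^ 2 * max (1 - x / t) 0 ^ (d - 1)) ?_ ?_
      · intro t htmem
        rw [Set.uIcc_of_le hab.le] at htmem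
        have ht : 0 < t := lt_of_lt_of_le ha htmem.1
        have h1 := (aux_deriv d hd x hx ht).const_mul (a * b / (b - a) / (x * d))
        convert h1 using 1 <;> try rfl
        field_simp
      · apply ContinuousOn.intervalIntegrable
        rw [Set.uIcc_of_le hab.le]
        apply ContinuousOn.mul
        · exact continuousOn_const.div (continuous_pow 2).continuousOn
            (fun t ht => pow_ne_zero 2 (ht0 t ht))
        · exact ((continuousOn_const.sub (continuousOn_const.div continuousOn_id ht0)).sup
            continuousOn_const).pow _
    rw [hFTC]
    have hx0 : x ≠ 0 := hx.ne'
    field_simp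
  · have hIcc : (∫ t in Set.Icc a b, a * b / (b - a) / t ^ 2)
        = ∫ t in a..b, a * b / (b - a) / t ^ 2 := by
      rw [intervalIntegral.integral_of_le hab.le, ← MeasureTheory.integral_Icc_eq_integral_Ioc]
    rw [hIcc]
    have hFTC : ∫ t in a..b, a * b / (b - a) / t ^ 2
        = -(a * b / (b - a) * b⁻¹) - -(a * b / (b - a) * a⁻¹) := by
      refine intervalIntegral.integral_eq_sub_of_hasDerivAt
        (f := fun t => -(a * b / (b - a) * t⁻¹))
        (f' := fun t => a * b / (b - a) / t ^ 2) ?_ ?_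
      · intro t htmem
        rw [Set.uIcc_of_le hab.le] at htmem
        have ht : 0 < t := lt_of_lt_of_le ha htmem.1
        have h1 := ((hasDerivAt_inv ht.ne').const_mul (a * b / (b - a))).neg
        convert h1 using 1 <;> try rfl
        field_simp
      · apply ContinuousOn.intervalIntegrable
        rw [Set.uIcc_of_le hab.le]
        exact continuousOn_const.div (continuous_pow 2).continuousOn
          (fun t ht => pow_ne_zero 2 (ht0 t ht))
    rw [hFTC]
    field_simp
    ring
end
end

section
/- Let ψ be a 2-monotone Archimedean generator (nonincreasing, convex, ψ(0)=1, ψ(∞)=0) generating the bivariate copula C(u,v) = ψ(ψ⁻¹(u)+ψ⁻¹(v)), and let R have the radial distribution F_R = 𝔚₂⁻¹ψ. Then Kendall's tau satisfies τ(C) = 4E[ψ(R)] - 1. -/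
open Set MeasureTheory ProbabilityTheory Filter
open scoped Topology

noncomputable section

/-- An Archimedean generator: a continuous nonincreasing function `ψ : [0,∞) → [0,1]`
with `ψ 0 = 1`, `ψ(∞) = 0`, strictly decreasing where it is positive. -/
def IsArchGen (ψ : ℝ → ℝ) : Prop :=
  ContinuousOn ψ (Set.Ici 0) ∧ AntitoneOn ψ (Set.Ici 0) ∧ ψ 0 = 1 ∧
  Filter.Tendsto ψ Filter.atTop (nhds 0) ∧ (∀ x ∈ Set.Ici (0:ℝ), 0 ≤ ψ x ∧ ψ x ≤ 1) ∧
  StrictAntiOn ψ {x | 0 ≤ x ∧ 0 < ψ x}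

/-- Generalized inverse of an Archimedean generator, with the convention
`ψ⁻¹ 0 = inf {x | ψ x = 0}`. -/
def psiInv (ψ : ℝ → ℝ) (u : ℝ) : ℝ := sInf {x | 0 ≤ x ∧ ψ x ≤ u}



section ArchAux
variable {ψ : ℝ → ℝ} {u v c : ℝ}

lemma Tbdd : BddBelow {x | 0 ≤ x ∧ ψ x ≤ v} := ⟨0, fun x hx => hx.1⟩

lemma Tclosed (hcont : ContinuousOn ψ (Set.Ici 0)) (v : ℝ) :
    IsClosed {x | 0 ≤ x ∧ ψ x ≤ v} := by
  have : {x | 0 ≤ x ∧ ψ x ≤ v} = Set.Ici 0 ∩ ψ ⁻¹' (Set.Iic v) := by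
    ext x; simp [Set.mem_Ici, Set.mem_Iic, Set.mem_preimage]
  rw [this]
  exact hcont.preimage_isClosed_of_isClosed isClosed_Ici isClosed_Iic

lemma Tnonempty (hex : ∃ z, 0 ≤ z ∧ ψ z = 0) (hv : 0 ≤ v) :
    Set.Nonempty {x | 0 ≤ x ∧ ψ x ≤ v} := by
  obtain ⟨z, hz0, hz⟩ := hex; exact ⟨z, hz0, by rw [hz]; exact hv⟩

lemma inv_nonneg' : 0 ≤ psiInv ψ v := Real.sInf_nonneg (fun x hx => hx.1)

lemma psi_inv_eq (hcont : ContinuousOn ψ (Set.Ici 0)) (hone : ψ 0 = 1)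
    (hex : ∃ z, 0 ≤ z ∧ ψ z = 0) (hv : v ∈ Set.Icc (0:ℝ) 1) :
    ψ (psiInv ψ v) = v := by
  set m := psiInv ψ v with hm
  have hne := Tnonempty hex hv.1
  have hmem : m ∈ {x | 0 ≤ x ∧ ψ x ≤ v} :=
    (Tclosed hcont v).csInf_mem hne Tbdd
  refine le_antisymm hmem.2 ?_
  rcases eq_or_lt_of_le hmem.1 with h0 | h0
  · rw [← h0, hone]; exact hv.2
  · -- m > 0 : approximate from the left
    have hne2 : (nhdsWithin m (Set.Ioo 0 m)).NeBot := by
      rw [← mem_closure_iff_nhdsWithin_neBot, closure_Ioo (ne_of_lt h0)]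
      exact ⟨le_of_lt h0, le_refl m⟩
    have htend : Filter.Tendsto ψ (nhdsWithin m (Set.Ioo 0 m)) (nhds (ψ m)) :=
      (hcont.continuousWithinAt hmem.1).mono (fun x hx => le_of_lt hx.1)
    refine ge_of_tendsto htend ?_
    refine Filter.eventually_of_mem self_mem_nhdsWithin (fun x hx => ?_)
    by_contra hlt
    push_neg at hlt
    have : m ≤ x := csInf_le Tbdd ⟨le_of_lt hx.1, le_of_lt hlt⟩
    exact absurd hx.2 (not_lt.mpr this)

lemma galois (hcont : ContinuousOn ψ (Set.Ici 0)) (hanti : AntitoneOn ψ (Set.Ici 0))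
    (hone : ψ 0 = 1) (hex : ∃ z, 0 ≤ z ∧ ψ z = 0)
    (hv : v ∈ Set.Icc (0:ℝ) 1) (hc : 0 ≤ c) :
    psiInv ψ v ≤ c ↔ ψ c ≤ v := by
  constructor
  · intro h
    calc ψ c ≤ ψ (psiInv ψ v) := hanti (Set.mem_Ici.mpr inv_nonneg') (Set.mem_Ici.mpr hc) h
    _ = v := psi_inv_eq hcont hone hex hv
  · intro h
    exact csInf_le Tbdd ⟨hc, h⟩

lemma inv_psi_le (hc : 0 ≤ c) : psiInv ψ (ψ c) ≤ c := csInf_le Tbdd ⟨hc, le_refl _⟩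

lemma le_psiInv (hcont : ContinuousOn ψ (Set.Ici 0)) (hanti : AntitoneOn ψ (Set.Ici 0))
    (hone : ψ 0 = 1) (hrange : ∀ x ∈ Set.Ici (0:ℝ), 0 ≤ ψ x ∧ ψ x ≤ 1)
    (hstrict : StrictAntiOn ψ {x | 0 ≤ x ∧ 0 < ψ x})
    (hex : ∃ z, 0 ≤ z ∧ ψ z = 0)
    (hu : 0 < u) (hc : 0 ≤ c) (h : u ≤ ψ c) : c ≤ psiInv ψ u := by
  set m := psiInv ψ u with hm
  have hu1 : u ∈ Set.Icc (0:ℝ) 1 := ⟨le_of_lt hu, le_trans h (hrange c hc).2⟩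
  have hψm : ψ m = u := psi_inv_eq hcont hone hex hu1
  by_contra hlt
  push_neg at hlt
  have : ψ c < ψ m := hstrict ⟨inv_nonneg', by rw [hψm]; exact hu⟩
    ⟨hc, lt_of_lt_of_le hu h⟩ hlt
  rw [hψm] at this
  exact absurd h (not_le.mpr this)

lemma psiInv_one (hone : ψ 0 = 1) : psiInv ψ 1 = 0 :=
  le_antisymm (csInf_le Tbdd ⟨le_refl 0, le_of_eq hone⟩) inv_nonneg'

lemma inv_anti (hex : ∃ z, 0 ≤ z ∧ ψ z = 0) (hu : 0 ≤ u) (huv : u ≤ v) :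
    psiInv ψ v ≤ psiInv ψ u :=
  csInf_le_csInf Tbdd (Tnonempty hex hu) (fun x hx => ⟨hx.1, le_trans hx.2 huv⟩)

lemma psi_eq_zero_of_ge (hanti : AntitoneOn ψ (Set.Ici 0))
    (hrange : ∀ x ∈ Set.Ici (0:ℝ), 0 ≤ ψ x ∧ ψ x ≤ 1)
    {z x : ℝ} (hz0 : 0 ≤ z) (hz : ψ z = 0) (hx : z ≤ x) : ψ x = 0 :=
  le_antisymm (hz ▸ hanti (Set.mem_Ici.mpr hz0) (Set.mem_Ici.mpr (le_trans hz0 hx)) hx)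
    (hrange x (le_trans hz0 hx)).1

lemma L7 (hcont : ContinuousOn ψ (Set.Ici 0)) (hanti : AntitoneOn ψ (Set.Ici 0))
    (hone : ψ 0 = 1) (hrange : ∀ x ∈ Set.Ici (0:ℝ), 0 ≤ ψ x ∧ ψ x ≤ 1)
    (hstrict : StrictAntiOn ψ {x | 0 ≤ x ∧ 0 < ψ x})
    (hex : ∃ z, 0 ≤ z ∧ ψ z = 0)
    {a b : ℝ} (ha : 0 ≤ a) (hb : 0 ≤ b) :
    ψ (psiInv ψ (ψ a) + psiInv ψ (ψ b)) = ψ (a + b) := by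
  rcases le_or_gt (ψ a) 0 with hpa | hpa
  · have hpa0 : ψ a = 0 := le_antisymm hpa (hrange a ha).1
    have h1 : ψ (psiInv ψ (ψ a) + psiInv ψ (ψ b)) = 0 := by
      have hinv : ψ (psiInv ψ (ψ a)) = 0 := by
        rw [hpa0]; exact psi_inv_eq hcont hone hex ⟨le_refl 0, zero_le_one⟩
      exact psi_eq_zero_of_ge hanti hrange inv_nonneg' hinv
        (le_add_of_nonneg_right inv_nonneg')
    have h2 : ψ (a + b) = 0 :=
      psi_eq_zero_of_ge hanti hrange ha hpa0 (le_add_of_nonneg_right hb)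
    rw [h1, h2]
  · rcases le_or_gt (ψ b) 0 with hpb | hpb
    · have hpb0 : ψ b = 0 := le_antisymm hpb (hrange b hb).1
      have h1 : ψ (psiInv ψ (ψ a) + psiInv ψ (ψ b)) = 0 := by
        have hinv : ψ (psiInv ψ (ψ b)) = 0 := by
          rw [hpb0]; exact psi_inv_eq hcont hone hex ⟨le_refl 0, zero_le_one⟩
        exact psi_eq_zero_of_ge hanti hrange inv_nonneg' hinv
          (le_add_of_nonneg_left inv_nonneg')
      have h2 : ψ (a + b) = 0 :=
        psi_eq_zero_of_ge hanti hrange hb hpb0 (le_add_of_nonneg_left ha)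
      rw [h1, h2]
    · have hea : psiInv ψ (ψ a) = a :=
        le_antisymm (inv_psi_le ha)
          (le_psiInv hcont hanti hone hrange hstrict hex hpa ha (le_refl _))
      have heb : psiInv ψ (ψ b) = b :=
        le_antisymm (inv_psi_le hb)
          (le_psiInv hcont hanti hone hrange hstrict hex hpb hb (le_refl _))
      rw [hea, heb]

lemma psi_inv_psi (hcont : ContinuousOn ψ (Set.Ici 0)) (hanti : AntitoneOn ψ (Set.Ici 0))
    (hone : ψ 0 = 1) (hrange : ∀ x ∈ Set.Ici (0:ℝ), 0 ≤ ψ x ∧ ψ x ≤ 1)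
    (hstrict : StrictAntiOn ψ {x | 0 ≤ x ∧ 0 < ψ x})
    (hex : ∃ z, 0 ≤ z ∧ ψ z = 0)
    {a : ℝ} (ha : 0 ≤ a) : ψ (psiInv ψ (ψ a)) = ψ a := by
  have h := L7 hcont hanti hone hrange hstrict hex ha (le_refl (0:ℝ))
  rw [hone, psiInv_one hone, add_zero, add_zero] at h
  exact h

end ArchAux

-- helper nat lemma
lemma nat_cross (Q : ℕ → Prop) : ∀ n, Q 0 → ¬ Q n → ∃ i, i < n ∧ Q i ∧ ¬ Q (i+1) := by
  intro n
  induction n with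
  | zero => intro h0 hn; exact absurd h0 hn
  | succ m ih =>
    intro h0 hn
    by_cases hm : Q m
    · exact ⟨m, Nat.lt_succ_self m, hm, hn⟩
    · obtain ⟨i, hi, h1, h2⟩ := ih h0 hm
      exact ⟨i, Nat.lt_succ_of_lt hi, h1, h2⟩

noncomputable def clamp01 (u : ℝ) : ℝ := max (min u 1) 0

lemma clamp01_mem (u : ℝ) : clamp01 u ∈ Set.Icc (0:ℝ) 1 :=
  ⟨le_max_right _ _, max_le (min_le_right _ _) zero_le_one⟩

lemma clamp01_mono : Monotone clamp01 :=
  fun _ _ h => max_le_max (min_le_min h (le_refl 1)) (le_refl 0)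

lemma clamp01_eq {u : ℝ} (h0 : 0 ≤ u) (h1 : u ≤ 1) : clamp01 u = u := by
  unfold clamp01; rw [min_eq_left h1, max_eq_left h0]

lemma le_clamp01 {w u : ℝ} (hw0 : 0 ≤ w) (hw1 : w ≤ 1) (h : w ≤ u) : w ≤ clamp01 u := by
  unfold clamp01
  rcases le_or_gt u 1 with h' | h'
  · rw [min_eq_left h']; exact le_trans h (le_max_left _ _)
  · rw [min_eq_right (le_of_lt h')]; exact le_trans hw1 (le_max_left _ _)

section NuSide
variable {Ω' : Type*} [MeasurableSpace Ω'] {ν : Measure Ω'} [IsProbabilityMeasure ν]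
variable {ψ : ℝ → ℝ} {U V : Ω' → ℝ}

lemma cdf_eq
    (hcont : ContinuousOn ψ (Set.Ici 0)) (hanti : AntitoneOn ψ (Set.Ici 0))
    (hone : ψ 0 = 1)
    (hrange : ∀ x ∈ Set.Ici (0:ℝ), 0 ≤ ψ x ∧ ψ x ≤ 1)
    (hstrict : StrictAntiOn ψ {x | 0 ≤ x ∧ 0 < ψ x})
    (hex : ∃ z, 0 ≤ z ∧ ψ z = 0)
    (hUm : Measurable U) (hVm : Measurable V)
    (hUV : ∀ u ∈ Set.Icc (0:ℝ) 1, ∀ v ∈ Set.Icc (0:ℝ) 1,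
      (ν {ω | U ω ≤ u ∧ V ω ≤ v}).toReal = ψ (psiInv ψ u + psiInv ψ v))
    {x : ℝ} (hx : 0 < x) (hdiff : DifferentiableAt ℝ ψ x) :
    (ν {ω | psiInv ψ (clamp01 (U ω)) + psiInv ψ (clamp01 (V ω)) ≤ x}).toReal
      = 1 - ψ x + x * deriv ψ x := by
  have hrange' : ∀ c : ℝ, 0 ≤ c → ψ c ∈ Set.Icc (0:ℝ) 1 := fun c hc => hrange c hc
  have msUV : ∀ a w : ℝ, MeasurableSet {ω | U ω ≤ a ∧ V ω ≤ w} := fun a w =>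
    (hUm measurableSet_Iic).inter (hVm measurableSet_Iic)
  -- rectangle formula
  have rect : ∀ a b w : ℝ, 0 ≤ a → a ≤ b → b ≤ 1 → w ∈ Set.Icc (0:ℝ) 1 →
      (ν {ω | (a < U ω ∧ U ω ≤ b) ∧ V ω ≤ w}).toReal
        = ψ (psiInv ψ b + psiInv ψ w) - ψ (psiInv ψ a + psiInv ψ w) := by
    intro a b w ha hab hb1 hw
    have hsub : {ω | U ω ≤ a ∧ V ω ≤ w} ⊆ {ω | U ω ≤ b ∧ V ω ≤ w} :=
      fun ω hω => ⟨le_trans hω.1 hab, hω.2⟩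
    have hevent : {ω | (a < U ω ∧ U ω ≤ b) ∧ V ω ≤ w}
        = {ω | U ω ≤ b ∧ V ω ≤ w} \ {ω | U ω ≤ a ∧ V ω ≤ w} := by
      ext ω; simp only [Set.mem_setOf_eq, Set.mem_diff]
      constructor
      · rintro ⟨⟨h1, h2⟩, h3⟩; exact ⟨⟨h2, h3⟩, fun hc => absurd hc.1 (not_le.mpr h1)⟩
      · rintro ⟨⟨h2, h3⟩, h4⟩
        refine ⟨⟨?_, h2⟩, h3⟩
        by_contra hc; push_neg at hc; exact h4 ⟨hc, h3⟩
    rw [hevent, measure_diff hsub ((msUV a w).nullMeasurableSet) (measure_ne_top ν _),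
      ENNReal.toReal_sub_of_le (measure_mono hsub) (measure_ne_top ν _),
      hUV b ⟨le_trans ha hab, hb1⟩ w hw, hUV a ⟨ha, le_trans hab hb1⟩ w hw]
  -- null sets
  have hAll : ν {ω | U ω ≤ 1 ∧ V ω ≤ 1} = 1 := by
    have h := hUV 1 ⟨zero_le_one, le_refl 1⟩ 1 ⟨zero_le_one, le_refl 1⟩
    rw [psiInv_one hone, add_zero, hone] at h
    exact (ENNReal.toReal_eq_toReal_iff' (measure_ne_top ν _) ENNReal.one_ne_top).mp
      (by rw [h, ENNReal.toReal_one])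
  have hN1 : ν {ω | ¬(U ω ≤ 1 ∧ V ω ≤ 1)} = 0 := by
    have he : {ω | ¬(U ω ≤ 1 ∧ V ω ≤ 1)} = {ω | U ω ≤ 1 ∧ V ω ≤ 1}ᶜ := rfl
    rw [he, measure_compl (msUV 1 1) (measure_ne_top ν _), hAll, measure_univ, tsub_self]
  have hN2 : ν {ω | U ω ≤ 0 ∧ V ω ≤ 1} = 0 := by
    have h := hUV 0 ⟨le_refl 0, zero_le_one⟩ 1 ⟨zero_le_one, le_refl 1⟩
    rw [psiInv_one hone, add_zero, psi_inv_eq hcont hone hex ⟨le_refl 0, zero_le_one⟩] at h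
    exact ((ENNReal.toReal_eq_zero_iff _).mp h).resolve_right (measure_ne_top ν _)
  have hN3 : ν {ω | U ω ≤ 1 ∧ V ω ≤ 0} = 0 := by
    have h := hUV 1 ⟨zero_le_one, le_refl 1⟩ 0 ⟨le_refl 0, zero_le_one⟩
    rw [psiInv_one hone, zero_add, psi_inv_eq hcont hone hex ⟨le_refl 0, zero_le_one⟩] at h
    exact ((ENNReal.toReal_eq_zero_iff _).mp h).resolve_right (measure_ne_top ν _)
  have hV1 : ν {ω | V ω = 1 ∧ U ω ≤ 1} = 0 := by
    have key : ∀ n : ℕ, (ν {ω | V ω = 1 ∧ U ω ≤ 1}).toReal ≤ 1/(n+1) := by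
      intro n
      have hpos : (0:ℝ) < 1/((n:ℝ)+1) := by positivity
      set c : ℝ := 1 - 1/((n:ℝ)+1) with hc
      have hle : 1/((n:ℝ)+1) ≤ 1 := by
        rw [div_le_one (by positivity)]; linarith [(Nat.cast_nonneg n : (0:ℝ) ≤ n)]
      have hc0 : 0 ≤ c := by rw [hc]; linarith
      have hc1 : c ≤ 1 := by rw [hc]; linarith
      have hsub2 : {ω | U ω ≤ 1 ∧ V ω ≤ c} ⊆ {ω | U ω ≤ 1 ∧ V ω ≤ 1} :=
        fun ω hω => ⟨hω.1, le_trans hω.2 hc1⟩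
      have hsub : {ω | V ω = 1 ∧ U ω ≤ 1} ⊆
          {ω | U ω ≤ 1 ∧ V ω ≤ 1} \ {ω | U ω ≤ 1 ∧ V ω ≤ c} := by
        rintro ω ⟨h1, h2⟩
        refine ⟨⟨h2, le_of_eq h1⟩, fun hcon => ?_⟩
        simp only [Set.mem_setOf_eq] at hcon
        rw [h1] at hcon
        have := hcon.2
        rw [hc] at this
        linarith
      have e2 := hUV 1 ⟨zero_le_one, le_refl 1⟩ c ⟨hc0, hc1⟩
      rw [psiInv_one hone, zero_add, psi_inv_eq hcont hone hex ⟨hc0, hc1⟩] at e2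
      calc (ν {ω | V ω = 1 ∧ U ω ≤ 1}).toReal
          ≤ (ν ({ω | U ω ≤ 1 ∧ V ω ≤ 1} \ {ω | U ω ≤ 1 ∧ V ω ≤ c})).toReal :=
            ENNReal.toReal_mono (measure_ne_top ν _) (measure_mono hsub)
        _ = (ν {ω | U ω ≤ 1 ∧ V ω ≤ 1}).toReal - (ν {ω | U ω ≤ 1 ∧ V ω ≤ c}).toReal := by
            rw [measure_diff hsub2 ((msUV 1 c).nullMeasurableSet) (measure_ne_top ν _),
              ENNReal.toReal_sub_of_le (measure_mono hsub2) (measure_ne_top ν _)]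
        _ = 1 - c := by rw [hAll, ENNReal.toReal_one, e2]
        _ = 1/((n:ℝ)+1) := by rw [hc]; ring
    have h0 : (ν {ω | V ω = 1 ∧ U ω ≤ 1}).toReal ≤ 0 :=
      ge_of_tendsto' tendsto_one_div_add_atTop_nhds_zero_nat key
    have h0' : (ν {ω | V ω = 1 ∧ U ω ≤ 1}).toReal = 0 :=
      le_antisymm h0 ENNReal.toReal_nonneg
    exact ((ENNReal.toReal_eq_zero_iff _).mp h0').resolve_right (measure_ne_top ν _)
  have hNset : ν {ω | ¬(0 < U ω ∧ U ω ≤ 1 ∧ 0 < V ω ∧ V ω < 1)} = 0 := by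
    refine measure_mono_null (fun ω hω => ?_)
      (measure_union_null (measure_union_null (measure_union_null hN1 hN2) hN3) hV1)
    simp only [Set.mem_setOf_eq, Set.mem_union]
    by_cases h1 : U ω ≤ 1
    · by_cases h2 : V ω ≤ 1
      · by_cases h3 : U ω ≤ 0
        · exact Or.inl (Or.inl (Or.inr ⟨h3, h2⟩))
        · by_cases h4 : V ω ≤ 0
          · exact Or.inl (Or.inr ⟨h1, h4⟩)
          · by_cases h5 : V ω = 1
            · exact Or.inr ⟨h5, h1⟩
            · exact absurd ⟨not_le.mp h3, h1, not_le.mp h4, lt_of_le_of_ne h2 h5⟩ hω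
      · exact Or.inl (Or.inl (Or.inl (fun hc => h2 hc.2)))
    · exact Or.inl (Or.inl (Or.inl (fun hc => h1 hc.1)))
  set St : Ω' → ℝ := fun ω => psiInv ψ (clamp01 (U ω)) + psiInv ψ (clamp01 (V ω)) with hStdef
  have LB : ∀ n : ℕ, 0 < n →
      (1 - ψ x) - n * (ψ (x - x/n) - ψ x) ≤ (ν {ω | St ω ≤ x}).toReal := by
    intro n hn
    have hnR : (0:ℝ) < n := Nat.cast_pos.mpr hn
    set h := x / n with hh
    have hh0 : 0 < h := div_pos hx hnR
    set t : ℕ → ℝ := fun i => i * h with ht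
    have ht0 : ∀ i, 0 ≤ t i := fun i => mul_nonneg (Nat.cast_nonneg i) hh0.le
    have htn : t n = x := by
      rw [ht]; field_simp [hh]; rw [hh]; field_simp
    have htmono' : ∀ i j, i ≤ j → t i ≤ t j := fun i j hij =>
      mul_le_mul_of_nonneg_right (Nat.cast_le.mpr hij) hh0.le
    have htle : ∀ i, i ≤ n → t i ≤ x := fun i hi => htn ▸ htmono' i n hi
    have htsucc : ∀ i, t (i+1) = t i + h := by
      intro i; rw [ht]; push_cast; ring
    set B : ℕ → Set Ω' := fun i =>
      {ω | (ψ (t (i+1)) < U ω ∧ U ω ≤ ψ (t i)) ∧ ψ (x - t (i+1)) ≤ V ω} with hB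
    have hBmeas : ∀ i, MeasurableSet (B i) := fun i =>
      ((hUm measurableSet_Ioi).inter (hUm measurableSet_Iic)).inter (hVm measurableSet_Ici)
    have hBsub : ∀ i ∈ Finset.range n, B i ⊆ {ω | St ω ≤ x} := by
      intro i hi ω hω
      have hin : i + 1 ≤ n := Finset.mem_range.mp hi
      obtain ⟨⟨h1, h2⟩, h3⟩ := hω
      have hxt : 0 ≤ x - t (i+1) := sub_nonneg.mpr (htle (i+1) hin)
      have hui : ψ (t (i+1)) ≤ clamp01 (U ω) :=
        le_clamp01 (hrange _ (ht0 _)).1 (hrange _ (ht0 _)).2 h1.le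
      have hgU : psiInv ψ (clamp01 (U ω)) ≤ t (i+1) := csInf_le Tbdd ⟨ht0 _, hui⟩
      have hwi : ψ (x - t (i+1)) ≤ clamp01 (V ω) :=
        le_clamp01 (hrange _ hxt).1 (hrange _ hxt).2 h3
      have hgV : psiInv ψ (clamp01 (V ω)) ≤ x - t (i+1) :=
        le_trans (inv_anti hex (hrange _ hxt).1 hwi) (inv_psi_le hxt)
      show psiInv ψ (clamp01 (U ω)) + psiInv ψ (clamp01 (V ω)) ≤ x
      linarith
    have hBdisj : (↑(Finset.range n) : Set ℕ).PairwiseDisjoint B := by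
      have hkey : ∀ i j : ℕ, i < j → Disjoint (B i) (B j) := by
        intro i j hlt
        refine Set.disjoint_left.mpr ?_
        rintro ω ⟨⟨hi1, _⟩, _⟩ ⟨⟨_, hj2⟩, _⟩
        have h1 : t (i+1) ≤ t j := htmono' _ _ hlt
        have h2 : ψ (t j) ≤ ψ (t (i+1)) :=
          hanti (Set.mem_Ici.mpr (ht0 _)) (Set.mem_Ici.mpr (ht0 _)) h1
        linarith
      intro i _ j _ hij
      rcases lt_or_gt_of_ne hij with hlt | hlt
      · exact hkey i j hlt
      · exact (hkey j i hlt).symm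
    have hsum : ∑ i ∈ Finset.range n, (ν (B i)).toReal ≤ (ν {ω | St ω ≤ x}).toReal := by
      rw [← ENNReal.toReal_sum (fun i _ => measure_ne_top ν _),
        ← measure_biUnion_finset hBdisj (fun i _ => hBmeas i)]
      exact ENNReal.toReal_mono (measure_ne_top ν _)
        (measure_mono (Set.iUnion₂_subset hBsub))
    have hper : ∀ i ∈ Finset.range n,
        (ψ (t i) - ψ (t (i+1))) - (ψ (x - h) - ψ x) ≤ (ν (B i)).toReal := by
      intro i hi
      have hin : i + 1 ≤ n := Finset.mem_range.mp hi
      have hxt1 : 0 ≤ x - t (i+1) := sub_nonneg.mpr (htle (i+1) hin)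
      set w : ℝ := ψ (x - t (i+1)) with hw
      have hw01 : w ∈ Set.Icc (0:ℝ) 1 := hrange' _ hxt1
      have hab : ψ (t (i+1)) ≤ ψ (t i) :=
        hanti (Set.mem_Ici.mpr (ht0 _)) (Set.mem_Ici.mpr (ht0 _))
          ((htsucc i) ▸ le_add_of_nonneg_right hh0.le)
      have hmono2 : {ω | (ψ (t (i+1)) < U ω ∧ U ω ≤ ψ (t i)) ∧ V ω ≤ w}
          ⊆ {ω | (ψ (t (i+1)) < U ω ∧ U ω ≤ ψ (t i)) ∧ V ω ≤ 1} :=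
        fun ω hω => ⟨hω.1, le_trans hω.2 hw01.2⟩
      have hmeasw : ∀ c : ℝ, MeasurableSet {ω | (ψ (t (i+1)) < U ω ∧ U ω ≤ ψ (t i)) ∧ V ω ≤ c} :=
        fun c => ((hUm measurableSet_Ioi).inter (hUm measurableSet_Iic)).inter (hVm measurableSet_Iic)
      have hDsub : {ω | (ψ (t (i+1)) < U ω ∧ U ω ≤ ψ (t i)) ∧ V ω ≤ 1} \
          {ω | (ψ (t (i+1)) < U ω ∧ U ω ≤ ψ (t i)) ∧ V ω ≤ w} ⊆ B i := by
        rintro ω ⟨⟨hs, _⟩, hnot⟩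
        refine ⟨hs, ?_⟩
        by_contra hcon
        push_neg at hcon
        exact hnot ⟨hs, hcon.le⟩
      have e1 := rect (ψ (t (i+1))) (ψ (t i)) 1 (hrange _ (ht0 _)).1 hab
        (hrange _ (ht0 _)).2 ⟨zero_le_one, le_refl 1⟩
      rw [psiInv_one hone, add_zero, add_zero,
        psi_inv_psi hcont hanti hone hrange hstrict hex (ht0 i),
        psi_inv_psi hcont hanti hone hrange hstrict hex (ht0 (i+1))] at e1
      have e2 := rect (ψ (t (i+1))) (ψ (t i)) w (hrange _ (ht0 _)).1 hab
        (hrange _ (ht0 _)).2 hw01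
      rw [hw, L7 hcont hanti hone hrange hstrict hex (ht0 i) hxt1,
        L7 hcont hanti hone hrange hstrict hex (ht0 (i+1)) hxt1] at e2
      have ha1 : t i + (x - t (i+1)) = x - h := by rw [htsucc i]; ring
      have ha2 : t (i+1) + (x - t (i+1)) = x := by ring
      rw [ha1, ha2] at e2
      calc (ψ (t i) - ψ (t (i+1))) - (ψ (x - h) - ψ x)
          = (ν {ω | (ψ (t (i+1)) < U ω ∧ U ω ≤ ψ (t i)) ∧ V ω ≤ 1}).toReal
            - (ν {ω | (ψ (t (i+1)) < U ω ∧ U ω ≤ ψ (t i)) ∧ V ω ≤ w}).toReal := by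
            rw [e1, e2]
        _ = (ν ({ω | (ψ (t (i+1)) < U ω ∧ U ω ≤ ψ (t i)) ∧ V ω ≤ 1} \
              {ω | (ψ (t (i+1)) < U ω ∧ U ω ≤ ψ (t i)) ∧ V ω ≤ w})).toReal := by
            rw [measure_diff hmono2 ((hmeasw w).nullMeasurableSet) (measure_ne_top ν _),
              ENNReal.toReal_sub_of_le (measure_mono hmono2) (measure_ne_top ν _)]
        _ ≤ (ν (B i)).toReal :=
            ENNReal.toReal_mono (measure_ne_top ν _) (measure_mono hDsub)
    have hfinal := le_trans (Finset.sum_le_sum hper) hsum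
    have htel : ∑ i ∈ Finset.range n, ((ψ (t i) - ψ (t (i+1))) - (ψ (x - h) - ψ x))
        = (1 - ψ x) - n * (ψ (x - h) - ψ x) := by
      rw [Finset.sum_sub_distrib, Finset.sum_range_sub' (fun i => ψ (t i)) n,
        Finset.sum_const, Finset.card_range, nsmul_eq_mul]
      have : t 0 = 0 := by rw [ht]; simp
      rw [this, htn, hone]
    rw [htel] at hfinal
    exact hfinal
  have UB : ∀ n : ℕ, 0 < n → ∀ δ : ℝ, 0 < δ →
      (ν {ω | St ω ≤ x}).toReal ≤ (1 - ψ x) - n * (ψ (x + δ) - ψ (x + x/n + δ)) := by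
    intro n hn δ hδ
    have hnR : (0:ℝ) < n := Nat.cast_pos.mpr hn
    set h := x / n with hh
    have hh0 : 0 < h := div_pos hx hnR
    set t : ℕ → ℝ := fun i => i * h with ht
    have ht0 : ∀ i, 0 ≤ t i := fun i => mul_nonneg (Nat.cast_nonneg i) hh0.le
    have htn : t n = x := by rw [ht]; field_simp [hh]; rw [hh]; field_simp
    have htmono' : ∀ i j, i ≤ j → t i ≤ t j := fun i j hij =>
      mul_le_mul_of_nonneg_right (Nat.cast_le.mpr hij) hh0.le
    have htle : ∀ i, i ≤ n → t i ≤ x := fun i hi => htn ▸ htmono' i n hi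
    have htsucc : ∀ i, t (i+1) = t i + h := by
      intro i; rw [ht]; push_cast; ring
    set C : ℕ → Set Ω' := fun i =>
      {ω | (ψ (t (i+1)) < U ω ∧ U ω ≤ ψ (t i)) ∧ ψ (x - t i) ≤ V ω} with hC
    have hcover : {ω | St ω ≤ x} ⊆
        {ω | ¬(0 < U ω ∧ U ω ≤ 1 ∧ 0 < V ω ∧ V ω < 1)} ∪ ⋃ i ∈ Finset.range n, C i := by
      intro ω hω
      by_cases hN : (0 < U ω ∧ U ω ≤ 1 ∧ 0 < V ω ∧ V ω < 1)
      swap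
      · exact Or.inl hN
      obtain ⟨hU0, hU1, hV0, hV1lt⟩ := hN
      right
      have hclU : clamp01 (U ω) = U ω := clamp01_eq hU0.le hU1
      have hclV : clamp01 (V ω) = V ω := clamp01_eq hV0.le hV1lt.le
      have hSx : psiInv ψ (U ω) + psiInv ψ (V ω) ≤ x := by
        have hSt : St ω ≤ x := hω
        rw [hStdef] at hSt
        simp only [hclU, hclV] at hSt
        exact hSt
      have hQ0 : U ω ≤ ψ (t 0) := by
        have : t 0 = 0 := by rw [ht]; simp
        rw [this, hone]; exact hU1
      have hQn : ¬ (U ω ≤ ψ (t n)) := by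
        rw [htn]
        intro hUx
        have hgU : x ≤ psiInv ψ (U ω) :=
          le_psiInv hcont hanti hone hrange hstrict hex hU0 hx.le hUx
        have hgV : psiInv ψ (V ω) = 0 :=
          le_antisymm (by linarith [inv_nonneg' (ψ := ψ) (v := U ω)]) inv_nonneg'
        have hVeq := psi_inv_eq hcont hone hex ⟨hV0.le, hV1lt.le⟩
        rw [hgV, hone] at hVeq
        linarith
      obtain ⟨i, hi, hQi, hQi1⟩ := nat_cross (fun i => U ω ≤ ψ (t i)) n hQ0 hQn
      refine Set.mem_biUnion (Finset.mem_range.mpr hi) ?_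
      refine ⟨⟨not_le.mp hQi1, hQi⟩, ?_⟩
      have hti : 0 ≤ x - t i := sub_nonneg.mpr (htle i hi.le)
      have hgU : t i ≤ psiInv ψ (U ω) :=
        le_psiInv hcont hanti hone hrange hstrict hex hU0 (ht0 i) hQi
      have hgVle : psiInv ψ (V ω) ≤ x - t i := by linarith
      exact (galois hcont hanti hone hex ⟨hV0.le, hV1lt.le⟩ hti).mp hgVle
    have hmeasC : ∀ i, MeasurableSet (C i) := fun i =>
      ((hUm measurableSet_Ioi).inter (hUm measurableSet_Iic)).inter (hVm measurableSet_Ici)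
    have hmeasw : ∀ i, ∀ c : ℝ,
        MeasurableSet {ω | (ψ (t (i+1)) < U ω ∧ U ω ≤ ψ (t i)) ∧ V ω ≤ c} :=
      fun i c => ((hUm measurableSet_Ioi).inter (hUm measurableSet_Iic)).inter (hVm measurableSet_Iic)
    have hsumup : (ν {ω | St ω ≤ x}).toReal ≤ ∑ i ∈ Finset.range n, (ν (C i)).toReal := by
      have h1 : ν {ω | St ω ≤ x} ≤ ∑ i ∈ Finset.range n, ν (C i) := by
        refine le_trans (measure_mono hcover) ?_
        refine le_trans (measure_union_le _ _) ?_
        rw [hNset, zero_add]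
        exact measure_biUnion_finset_le _ _
      have h2 : (∑ i ∈ Finset.range n, ν (C i)) ≠ ⊤ :=
        (ENNReal.sum_lt_top.mpr (fun i _ => measure_lt_top ν _)).ne
      calc (ν {ω | St ω ≤ x}).toReal ≤ (∑ i ∈ Finset.range n, ν (C i)).toReal :=
            ENNReal.toReal_mono h2 h1
        _ = ∑ i ∈ Finset.range n, (ν (C i)).toReal :=
            ENNReal.toReal_sum (fun i _ => measure_ne_top ν _)
    have hper : ∀ i ∈ Finset.range n,
        (ν (C i)).toReal ≤ (ψ (t i) - ψ (t (i+1))) - (ψ (x + δ) - ψ (x + h + δ)) := by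
      intro i hi
      have hin : i + 1 ≤ n := Finset.mem_range.mp hi
      have hti : 0 ≤ x - t i := sub_nonneg.mpr (htle i (le_of_lt (Finset.mem_range.mp hi)))
      have hab : ψ (t (i+1)) ≤ ψ (t i) :=
        hanti (Set.mem_Ici.mpr (ht0 _)) (Set.mem_Ici.mpr (ht0 _))
          ((htsucc i) ▸ le_add_of_nonneg_right hh0.le)
      have e1 := rect (ψ (t (i+1))) (ψ (t i)) 1 (hrange _ (ht0 _)).1 hab
        (hrange _ (ht0 _)).2 ⟨zero_le_one, le_refl 1⟩
      rw [psiInv_one hone, add_zero, add_zero,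
        psi_inv_psi hcont hanti hone hrange hstrict hex (ht0 i),
        psi_inv_psi hcont hanti hone hrange hstrict hex (ht0 (i+1))] at e1
      by_cases hw0 : ψ (x - t i) = 0
      · have hz1 : ψ (x + δ) = 0 :=
          psi_eq_zero_of_ge hanti hrange hti hw0 (by linarith [ht0 i])
        have hz2 : ψ (x + h + δ) = 0 :=
          psi_eq_zero_of_ge hanti hrange hti hw0 (by linarith [ht0 i])
        have hsubC : C i ⊆ {ω | ¬(U ω ≤ 1 ∧ V ω ≤ 1)} ∪
            {ω | (ψ (t (i+1)) < U ω ∧ U ω ≤ ψ (t i)) ∧ V ω ≤ 1} := by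
          rintro ω ⟨hs, hv⟩
          by_cases hv1 : V ω ≤ 1
          · exact Or.inr ⟨hs, hv1⟩
          · exact Or.inl (fun hc => hv1 hc.2)
        have hb : ν (C i) ≤ ν {ω | (ψ (t (i+1)) < U ω ∧ U ω ≤ ψ (t i)) ∧ V ω ≤ 1} := by
          refine le_trans (measure_mono hsubC) ?_
          refine le_trans (measure_union_le _ _) ?_
          rw [hN1, zero_add]
        have := ENNReal.toReal_mono (measure_ne_top ν _) hb
        rw [e1] at this
        rw [hz1, hz2]
        linarith
      · have hwpos : 0 < ψ (x - t i) := lt_of_le_of_ne (hrange _ hti).1 (Ne.symm hw0)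
        have htiδ : (0:ℝ) ≤ x - t i + δ := by linarith
        set w' : ℝ := ψ (x - t i + δ) with hw'
        have hw'lt : w' < ψ (x - t i) := by
          rcases eq_or_lt_of_le (hrange _ htiδ).1 with hz | hz
          · rw [hw', ← hz]; exact hwpos
          · exact hstrict ⟨hti, hwpos⟩ ⟨htiδ, hz⟩ (by linarith)
        have hmono2 : {ω | (ψ (t (i+1)) < U ω ∧ U ω ≤ ψ (t i)) ∧ V ω ≤ w'}
            ⊆ {ω | (ψ (t (i+1)) < U ω ∧ U ω ≤ ψ (t i)) ∧ V ω ≤ 1} :=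
          fun ω hω => ⟨hω.1, le_trans hω.2 (hrange _ htiδ).2⟩
        have hsubC : C i ⊆ {ω | ¬(U ω ≤ 1 ∧ V ω ≤ 1)} ∪
            ({ω | (ψ (t (i+1)) < U ω ∧ U ω ≤ ψ (t i)) ∧ V ω ≤ 1} \
             {ω | (ψ (t (i+1)) < U ω ∧ U ω ≤ ψ (t i)) ∧ V ω ≤ w'}) := by
          rintro ω ⟨hs, hv⟩
          by_cases hv1 : V ω ≤ 1
          · exact Or.inr ⟨⟨hs, hv1⟩, fun hc => absurd hc.2 (not_le.mpr (lt_of_lt_of_le hw'lt hv))⟩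
          · exact Or.inl (fun hc => hv1 hc.2)
        have hb : ν (C i) ≤ ν ({ω | (ψ (t (i+1)) < U ω ∧ U ω ≤ ψ (t i)) ∧ V ω ≤ 1} \
             {ω | (ψ (t (i+1)) < U ω ∧ U ω ≤ ψ (t i)) ∧ V ω ≤ w'}) := by
          refine le_trans (measure_mono hsubC) ?_
          refine le_trans (measure_union_le _ _) ?_
          rw [hN1, zero_add]
        have hdiffeq : (ν ({ω | (ψ (t (i+1)) < U ω ∧ U ω ≤ ψ (t i)) ∧ V ω ≤ 1} \
             {ω | (ψ (t (i+1)) < U ω ∧ U ω ≤ ψ (t i)) ∧ V ω ≤ w'})).toReal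
            = (ν {ω | (ψ (t (i+1)) < U ω ∧ U ω ≤ ψ (t i)) ∧ V ω ≤ 1}).toReal
              - (ν {ω | (ψ (t (i+1)) < U ω ∧ U ω ≤ ψ (t i)) ∧ V ω ≤ w'}).toReal := by
          rw [measure_diff hmono2 ((hmeasw i w').nullMeasurableSet) (measure_ne_top ν _),
            ENNReal.toReal_sub_of_le (measure_mono hmono2) (measure_ne_top ν _)]
        have e2 := rect (ψ (t (i+1))) (ψ (t i)) w' (hrange _ (ht0 _)).1 hab
          (hrange _ (ht0 _)).2 (hrange' _ htiδ)
        rw [hw', L7 hcont hanti hone hrange hstrict hex (ht0 i) htiδ,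
          L7 hcont hanti hone hrange hstrict hex (ht0 (i+1)) htiδ] at e2
        have ha1 : t i + (x - t i + δ) = x + δ := by ring
        have ha2 : t (i+1) + (x - t i + δ) = x + h + δ := by rw [htsucc i]; ring
        rw [ha1, ha2] at e2
        have hfin := ENNReal.toReal_mono (measure_ne_top ν _) hb
        rw [hdiffeq, e1, e2] at hfin
        linarith
    have htel : ∑ i ∈ Finset.range n, ((ψ (t i) - ψ (t (i+1))) - (ψ (x + δ) - ψ (x + h + δ)))
        = (1 - ψ x) - n * (ψ (x + δ) - ψ (x + h + δ)) := by
      rw [Finset.sum_sub_distrib, Finset.sum_range_sub' (fun i => ψ (t i)) n,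
        Finset.sum_const, Finset.card_range, nsmul_eq_mul]
      have h0 : t 0 = 0 := by rw [ht]; simp
      rw [h0, htn, hone]
    calc (ν {ω | St ω ≤ x}).toReal ≤ ∑ i ∈ Finset.range n, (ν (C i)).toReal := hsumup
      _ ≤ ∑ i ∈ Finset.range n, ((ψ (t i) - ψ (t (i+1))) - (ψ (x + δ) - ψ (x + h + δ))) :=
          Finset.sum_le_sum hper
      _ = (1 - ψ x) - n * (ψ (x + δ) - ψ (x + h + δ)) := htel
  have hd := hdiff.hasDerivAt
  rw [hasDerivAt_iff_tendsto_slope] at hd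
  have hslope : ∀ (s : ℕ → ℝ), Tendsto s atTop (𝓝 x) → (∀ n, s n ≠ x) →
      Tendsto (fun n => (ψ (s n) - ψ x) / (s n - x)) atTop (𝓝 (deriv ψ x)) := by
    intro s hs hne
    have h1 : Tendsto s atTop (𝓝[≠] x) :=
      tendsto_nhdsWithin_of_tendsto_nhds_of_eventually_within s hs
        (Filter.Eventually.of_forall (fun n => hne n))
    have h2 := hd.comp h1
    exact h2.congr (fun n => by simp [Function.comp, slope_def_field])
  have hseq0 : Tendsto (fun n : ℕ => x/(n+1 : ℝ)) atTop (𝓝 0) := by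
    have := tendsto_one_div_add_atTop_nhds_zero_nat.const_mul x
    simpa [div_eq_mul_inv, mul_comm] using this
  have hs1 : Tendsto (fun n : ℕ => x - x/(n+1)) atTop (𝓝 x) := by
    have h := Filter.Tendsto.sub (tendsto_const_nhds (x := x) (f := atTop (α := ℕ))) hseq0
    simpa using h
  have hs2 : Tendsto (fun n : ℕ => x + x/(n+1)) atTop (𝓝 x) := by
    have h := Filter.Tendsto.add (tendsto_const_nhds (x := x) (f := atTop (α := ℕ))) hseq0
    simpa using h
  have hpos' : ∀ n : ℕ, (0:ℝ) < x/(n+1) := by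
    intro n; positivity
  have hLBlim : Tendsto (fun n : ℕ => (1 - ψ x) - ((n:ℝ)+1) * (ψ (x - x/(n+1)) - ψ x)) atTop
      (𝓝 (1 - ψ x + x * deriv ψ x)) := by
    have hne : ∀ n : ℕ, x - x/(n+1) ≠ x := fun n => ne_of_lt (by linarith [hpos' n])
    have h1 := (hslope _ hs1 hne).const_mul (-x)
    have h2 := tendsto_const_nhds.sub h1 (f := fun _ : ℕ => 1 - ψ x)
    have heq : (fun n : ℕ => (1 - ψ x) - (-x * ((ψ (x - x/(n+1)) - ψ x) / ((x - x/(n+1)) - x))))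
        = fun n : ℕ => (1 - ψ x) - ((n:ℝ)+1) * (ψ (x - x/(n+1)) - ψ x) := by
      funext n
      have hp : ((n:ℝ)+1) ≠ 0 := by positivity
      have hxne : x ≠ 0 := ne_of_gt hx
      congr 1
      have h1 : (x - x/((n:ℝ)+1)) - x = -(x/((n:ℝ)+1)) := by ring
      rw [h1]
      field_simp
    rw [heq] at h2
    have hval : (1 - ψ x) - (-x * deriv ψ x) = 1 - ψ x + x * deriv ψ x := by ring
    rw [hval] at h2
    exact h2
  have hUBlim : Tendsto (fun n : ℕ => (1 - ψ x) - ((n:ℝ)+1) * (ψ x - ψ (x + x/(n+1)))) atTop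
      (𝓝 (1 - ψ x + x * deriv ψ x)) := by
    have hne : ∀ n : ℕ, x + x/(n+1) ≠ x := fun n => ne_of_gt (by linarith [hpos' n])
    have h1 := (hslope _ hs2 hne).const_mul (-x)
    have h2 := tendsto_const_nhds.sub h1 (f := fun _ : ℕ => 1 - ψ x)
    have heq : (fun n : ℕ => (1 - ψ x) - (-x * ((ψ (x + x/(n+1)) - ψ x) / ((x + x/(n+1)) - x))))
        = fun n : ℕ => (1 - ψ x) - ((n:ℝ)+1) * (ψ x - ψ (x + x/(n+1))) := by
      funext n
      have hp : ((n:ℝ)+1) ≠ 0 := by positivity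
      have hxne : x ≠ 0 := ne_of_gt hx
      congr 1
      have h1 : (x + x/((n:ℝ)+1)) - x = x/((n:ℝ)+1) := by ring
      rw [h1]
      field_simp
      ring
    rw [heq] at h2
    have hval : (1 - ψ x) - (-x * deriv ψ x) = 1 - ψ x + x * deriv ψ x := by ring
    rw [hval] at h2
    exact h2
  have hge : 1 - ψ x + x * deriv ψ x ≤ (ν {ω | St ω ≤ x}).toReal := by
    refine le_of_tendsto hLBlim (Filter.Eventually.of_forall (fun n => ?_))
    have := LB (n+1) (Nat.succ_pos n)
    push_cast at this
    exact this
  have hub' : ∀ n : ℕ, (ν {ω | St ω ≤ x}).toReal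
      ≤ (1 - ψ x) - ((n:ℝ)+1) * (ψ x - ψ (x + x/(n+1))) := by
    intro n
    have hcψ : ∀ y : ℝ, 0 < y → ContinuousAt ψ y := fun y hy =>
      hcont.continuousAt (Ici_mem_nhds hy)
    have l1 : Tendsto (fun δ : ℝ => ψ (x + δ)) (𝓝 (0:ℝ)) (𝓝 (ψ x)) := by
      have hcomp : ContinuousAt (fun δ : ℝ => ψ (x + δ)) 0 :=
        ContinuousAt.comp (by rw [add_zero]; exact hcψ x hx)
          ((continuous_const.add continuous_id).continuousAt)
      simpa [add_zero] using hcomp.tendsto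
    have l2 : Tendsto (fun δ : ℝ => ψ (x + x/(n+1) + δ)) (𝓝 (0:ℝ)) (𝓝 (ψ (x + x/(n+1)))) := by
      have hcomp : ContinuousAt (fun δ : ℝ => ψ (x + x/(n+1) + δ)) 0 :=
        ContinuousAt.comp (by rw [add_zero]; exact hcψ _ (by linarith [hpos' n]))
          ((continuous_const.add continuous_id).continuousAt)
      simpa [add_zero] using hcomp.tendsto
    have ht1 : Tendsto (fun δ : ℝ => (1 - ψ x) - ((n:ℝ)+1) * (ψ (x + δ) - ψ (x + x/(n+1) + δ)))
        (𝓝[>] (0:ℝ)) (𝓝 ((1 - ψ x) - ((n:ℝ)+1) * (ψ x - ψ (x + x/(n+1))))) := by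
      have := tendsto_const_nhds.sub (((l1.sub l2).const_mul ((n:ℝ)+1)))
        (f := fun _ : ℝ => 1 - ψ x)
      exact (this.mono_left nhdsWithin_le_nhds)
    refine ge_of_tendsto ht1 (Filter.eventually_of_mem self_mem_nhdsWithin (fun δ hδ => ?_))
    have := UB (n+1) (Nat.succ_pos n) δ hδ
    push_cast at this
    exact this
  have hle : (ν {ω | St ω ≤ x}).toReal ≤ 1 - ψ x + x * deriv ψ x :=
    ge_of_tendsto hUBlim (Filter.Eventually.of_forall hub')
  have : (ν {ω | St ω ≤ x}).toReal = 1 - ψ x + x * deriv ψ x := le_antisymm hle hge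
  exact this

end NuSide

theorem stmt16' {Ω Ω' : Type*} [MeasurableSpace Ω] [MeasurableSpace Ω']
    (μ : Measure Ω) (ν : Measure Ω') [IsProbabilityMeasure μ] [IsProbabilityMeasure ν]
    (ψ : ℝ → ℝ)
    (hcont : ContinuousOn ψ (Set.Ici 0)) (hanti : AntitoneOn ψ (Set.Ici 0))
    (hone : ψ 0 = 1)
    (hrange : ∀ x ∈ Set.Ici (0:ℝ), 0 ≤ ψ x ∧ ψ x ≤ 1)
    (hstrict : StrictAntiOn ψ {x | 0 ≤ x ∧ 0 < ψ x})
    (R : Ω → ℝ) (hRm : Measurable R) (hR0 : ∀ ω, 0 ≤ R ω)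
    (hR : ∀ x : ℝ, 0 ≤ x →
      (μ {ω | R ω ≤ x}).toReal = 1 - ψ x + x * derivWithin ψ (Set.Ici x) x)
    (U V : Ω' → ℝ) (hUm : Measurable U) (hVm : Measurable V)
    (hUV : ∀ u ∈ Set.Icc (0:ℝ) 1, ∀ v ∈ Set.Icc (0:ℝ) 1,
      (ν {ω | U ω ≤ u ∧ V ω ≤ v}).toReal = ψ (psiInv ψ u + psiInv ψ v)) :
    (∫ ω, ψ (psiInv ψ (U ω) + psiInv ψ (V ω)) ∂ν) = ∫ ω, ψ (R ω) ∂μ := by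
  by_cases hex : ∃ z, 0 ≤ z ∧ ψ z = 0
  · -- main case
    set g : ℝ → ℝ := fun u => psiInv ψ (clamp01 u) with hg
    have hganti : Antitone g := fun u v huv =>
      inv_anti hex (clamp01_mem u).1 (clamp01_mono huv)
    have hgm : Measurable g := hganti.measurable
    set St : Ω' → ℝ := fun ω => g (U ω) + g (V ω) with hSt
    have hStm : Measurable St := (hgm.comp hUm).add (hgm.comp hVm)
    set Ψ : ℝ → ℝ := fun y => ψ (max y 0) with hΨ
    have hΨcont : Continuous Ψ :=
      hcont.comp_continuous (continuous_id.max continuous_const) (fun y => Set.mem_Ici.mpr (le_max_right _ _))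
    -- null sets (again)
    have msUV : ∀ a w : ℝ, MeasurableSet {ω | U ω ≤ a ∧ V ω ≤ w} := fun a w =>
      (hUm measurableSet_Iic).inter (hVm measurableSet_Iic)
    have hAll : ν {ω | U ω ≤ 1 ∧ V ω ≤ 1} = 1 := by
      have h := hUV 1 ⟨zero_le_one, le_refl 1⟩ 1 ⟨zero_le_one, le_refl 1⟩
      rw [psiInv_one hone, add_zero, hone] at h
      exact (ENNReal.toReal_eq_toReal_iff' (measure_ne_top ν _) ENNReal.one_ne_top).mp
        (by rw [h, ENNReal.toReal_one])
    have hN1 : ν {ω | ¬(U ω ≤ 1 ∧ V ω ≤ 1)} = 0 := by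
      have he : {ω | ¬(U ω ≤ 1 ∧ V ω ≤ 1)} = {ω | U ω ≤ 1 ∧ V ω ≤ 1}ᶜ := rfl
      rw [he, measure_compl (msUV 1 1) (measure_ne_top ν _), hAll, measure_univ, tsub_self]
    have hN2 : ν {ω | U ω ≤ 0 ∧ V ω ≤ 1} = 0 := by
      have h := hUV 0 ⟨le_refl 0, zero_le_one⟩ 1 ⟨zero_le_one, le_refl 1⟩
      rw [psiInv_one hone, add_zero, psi_inv_eq hcont hone hex ⟨le_refl 0, zero_le_one⟩] at h
      exact ((ENNReal.toReal_eq_zero_iff _).mp h).resolve_right (measure_ne_top ν _)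
    have hN3 : ν {ω | U ω ≤ 1 ∧ V ω ≤ 0} = 0 := by
      have h := hUV 1 ⟨zero_le_one, le_refl 1⟩ 0 ⟨le_refl 0, zero_le_one⟩
      rw [psiInv_one hone, zero_add, psi_inv_eq hcont hone hex ⟨le_refl 0, zero_le_one⟩] at h
      exact ((ENNReal.toReal_eq_zero_iff _).mp h).resolve_right (measure_ne_top ν _)
    have hnull : ν {ω | ¬(0 ≤ U ω ∧ U ω ≤ 1 ∧ 0 ≤ V ω ∧ V ω ≤ 1)} = 0 := by
      refine measure_mono_null (fun ω hω => ?_)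
        (measure_union_null (measure_union_null hN1 hN2) hN3)
      simp only [Set.mem_setOf_eq, Set.mem_union]
      by_cases h1 : U ω ≤ 1
      · by_cases h2 : V ω ≤ 1
        · by_cases h3 : 0 ≤ U ω
          · by_cases h4 : 0 ≤ V ω
            · exact absurd ⟨h3, h1, h4, h2⟩ hω
            · exact Or.inr ⟨h1, le_of_lt (not_le.mp h4)⟩
          · exact Or.inl (Or.inr ⟨le_of_lt (not_le.mp h3), h2⟩)
        · exact Or.inl (Or.inl (fun hc => h2 hc.2))
      · exact Or.inl (Or.inl (fun hc => h1 hc.1))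
    -- a.e. equality of integrands
    have hae : ∀ᵐ ω ∂ν, ψ (psiInv ψ (U ω) + psiInv ψ (V ω)) = Ψ (St ω) := by
      rw [ae_iff]
      refine measure_mono_null (fun ω hω => ?_) hnull
      simp only [Set.mem_setOf_eq] at hω ⊢
      intro hcon
      obtain ⟨h1, h2, h3, h4⟩ := hcon
      apply hω
      have hclU : clamp01 (U ω) = U ω := clamp01_eq h1 h2
      have hclV : clamp01 (V ω) = V ω := clamp01_eq h3 h4
      have hnn : 0 ≤ g (U ω) + g (V ω) := add_nonneg inv_nonneg' inv_nonneg'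
      rw [hSt, hΨ]
      simp only [hg, hclU, hclV]
      rw [max_eq_left]
      exact add_nonneg inv_nonneg' inv_nonneg'
    -- differentiability a.e. and density of good points
    have hnegmono : Monotone (fun y => -Ψ y) := by
      intro a b hab
      have h1 : Ψ b ≤ Ψ a := hanti (Set.mem_Ici.mpr (le_max_right a 0))
        (Set.mem_Ici.mpr (le_max_right b 0)) (max_le_max hab (le_refl 0))
      simpa using h1
    have hae_diff := hnegmono.ae_differentiableAt
    have hdense : ∀ y : ℝ, 0 ≤ y → ∀ ε : ℝ, 0 < ε →
        ∃ z, y < z ∧ z < y + ε ∧ 0 < z ∧ DifferentiableAt ℝ ψ z := by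
      intro y hy ε hε
      by_contra hcon
      push_neg at hcon
      have hsub : Set.Ioo y (y+ε) ⊆ {z | ¬ DifferentiableAt ℝ (fun y => -Ψ y) z} := by
        intro z hz hdz
        have hz0 : 0 < z := lt_of_le_of_lt hy hz.1
        have hΨψ : Ψ =ᶠ[nhds z] ψ := by
          filter_upwards [Ioi_mem_nhds hz0] with w hw
          rw [hΨ]
          simp only []
          rw [max_eq_left (le_of_lt hw)]
        have h1 : DifferentiableAt ℝ Ψ z := by
          have h2 := hdz.neg
          simpa using h2
        have hdψ : DifferentiableAt ℝ ψ z := hΨψ.differentiableAt_iff.mp h1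
        exact hcon z hz.1 hz.2 hz0 hdψ
      have h0 := measure_mono_null hsub (ae_iff.mp hae_diff)
      rw [Real.volume_Ioo] at h0
      have : (0:ℝ) < y + ε - y := by linarith
      exact (ENNReal.ofReal_pos.mpr this).ne' h0
    -- equality of Iic-measures at good points
    have hprob1 : IsProbabilityMeasure (ν.map St) := Measure.isProbabilityMeasure_map hStm.aemeasurable
    have hgood : ∀ z : ℝ, 0 < z → DifferentiableAt ℝ ψ z →
        (ν.map St) (Set.Iic z) = (μ.map R) (Set.Iic z) := by
      intro z hz hdz
      rw [Measure.map_apply hStm measurableSet_Iic, Measure.map_apply hRm measurableSet_Iic]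
      have e1 : (ν (St ⁻¹' Set.Iic z)).toReal = 1 - ψ z + z * deriv ψ z := by
        have h := cdf_eq hcont hanti hone hrange hstrict hex hUm hVm hUV hz hdz
        exact h
      have e2 : (μ (R ⁻¹' Set.Iic z)).toReal = 1 - ψ z + z * deriv ψ z := by
        have h := hR z hz.le
        rw [hdz.derivWithin (uniqueDiffOn_Ici z z Set.self_mem_Ici)] at h
        exact h
      exact (ENNReal.toReal_eq_toReal_iff' (measure_ne_top _ _) (measure_ne_top _ _)).mp
        (by rw [e1, e2])
    have hIic : ∀ y : ℝ, (ν.map St) (Set.Iic y) = (μ.map R) (Set.Iic y) := by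
      intro y
      rcases lt_or_ge y 0 with hy | hy
      · rw [Measure.map_apply hStm measurableSet_Iic, Measure.map_apply hRm measurableSet_Iic]
        have h1 : St ⁻¹' Set.Iic y = ∅ := by
          ext ω
          simp only [Set.mem_preimage, Set.mem_Iic, Set.mem_empty_iff_false, iff_false, not_le]
          have : 0 ≤ St ω := add_nonneg inv_nonneg' inv_nonneg'
          linarith
        have h2 : R ⁻¹' Set.Iic y = ∅ := by
          ext ω
          simp only [Set.mem_preimage, Set.mem_Iic, Set.mem_empty_iff_false, iff_false, not_le]
          linarith [hR0 ω]
        rw [h1, h2]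
        simp
      · have hch : ∀ k : ℕ, ∃ z, y < z ∧ z < y + 1/(k+1) ∧ 0 < z ∧ DifferentiableAt ℝ ψ z :=
          fun k => hdense y hy (1/(k+1)) (by positivity)
        choose f hf1 hf2 hf3 hf4 using hch
        let q : ℕ → ℝ := fun k => Nat.rec (f 0) (fun k qk => min qk (f (k+1))) k
        have hqs : ∀ k, q (k+1) = min (q k) (f (k+1)) := fun k => rfl
        have hqgood : ∀ k, y < q k ∧ q k < y + 1/(k+1) ∧
            (ν.map St) (Set.Iic (q k)) = (μ.map R) (Set.Iic (q k)) := by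
          intro k
          induction k with
          | zero => exact ⟨hf1 0, hf2 0, hgood _ (hf3 0) (hf4 0)⟩
          | succ k ih =>
            refine ⟨?_, ?_, ?_⟩
            · rw [hqs]; exact lt_min ih.1 (hf1 (k+1))
            · rw [hqs]
              refine lt_of_le_of_lt (min_le_right _ _) ?_
              have := hf2 (k+1)
              push_cast at this ⊢
              exact this
            · rw [hqs]; rcases min_choice (q k) (f (k+1)) with h | h
              · rw [h]; exact ih.2.2
              · rw [h]; exact hgood _ (hf3 (k+1)) (hf4 (k+1))
        have hqanti : Antitone q :=
          antitone_nat_of_succ_le (fun k => by rw [hqs]; exact min_le_left _ _)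
        have hInter : ⋂ k, Set.Iic (q k) = Set.Iic y := by
          ext w
          simp only [Set.mem_iInter, Set.mem_Iic]
          constructor
          · intro hw
            by_contra hcon
            push_neg at hcon
            obtain ⟨k, hk⟩ := exists_nat_one_div_lt (by linarith : (0:ℝ) < w - y)
            have h1 := hw k
            have h2 := (hqgood k).2.1
            push_cast at hk h2
            linarith
          · intro hw k; exact le_trans hw (hqgood k).1.le
        have ht1 := MeasureTheory.tendsto_measure_iInter_atTop (μ := ν.map St)
          (s := fun k => Set.Iic (q k))
          (fun k => measurableSet_Iic.nullMeasurableSet)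
          (fun i j hij => Set.Iic_subset_Iic.mpr (hqanti hij))
          ⟨0, measure_ne_top _ _⟩
        have ht2 := MeasureTheory.tendsto_measure_iInter_atTop (μ := μ.map R)
          (s := fun k => Set.Iic (q k))
          (fun k => measurableSet_Iic.nullMeasurableSet)
          (fun i j hij => Set.Iic_subset_Iic.mpr (hqanti hij))
          ⟨0, measure_ne_top _ _⟩
        rw [hInter] at ht1 ht2
        have hfe : (fun k => (ν.map St) (Set.Iic (q k))) = fun k => (μ.map R) (Set.Iic (q k)) :=
          funext fun k => (hqgood k).2.2
        have ht1' : Tendsto (fun k => (μ.map R) (Set.Iic (q k))) atTop (nhds ((ν.map St) (Set.Iic y))) := by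
          rw [← hfe]; exact ht1
        exact tendsto_nhds_unique ht1' ht2
    have hMeq : ν.map St = μ.map R := Measure.ext_of_Iic _ _ hIic
    calc (∫ ω, ψ (psiInv ψ (U ω) + psiInv ψ (V ω)) ∂ν)
        = ∫ ω, Ψ (St ω) ∂ν := integral_congr_ae hae
      _ = ∫ y, Ψ y ∂(ν.map St) :=
          (integral_map hStm.aemeasurable hΨcont.aestronglyMeasurable).symm
      _ = ∫ y, Ψ y ∂(μ.map R) := by rw [hMeq]
      _ = ∫ ω, Ψ (R ω) ∂μ := integral_map hRm.aemeasurable hΨcont.aestronglyMeasurable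
      _ = ∫ ω, ψ (R ω) ∂μ := by
          refine integral_congr_ae (Filter.Eventually.of_forall (fun ω => ?_))
          rw [hΨ]
          simp only []
          rw [max_eq_left (hR0 ω)]
  · -- contradiction case: ψ never vanishes on [0,∞)
    exfalso
    have hpos : ∀ z, 0 ≤ z → 0 < ψ z := by
      intro z hz
      rcases lt_or_eq_of_le (hrange z hz).1 with h | h
      · exact h
      · exact absurd ⟨z, hz, h.symm⟩ hex
    have hinv0 : psiInv ψ 0 = 0 := by
      unfold psiInv
      have he : {x : ℝ | 0 ≤ x ∧ ψ x ≤ 0} = ∅ := by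
        ext z
        simp only [Set.mem_setOf_eq, Set.mem_empty_iff_false, iff_false, not_and, not_le]
        intro hz
        exact hpos z hz
      rw [he, Real.sInf_empty]
    have hψ1pos : 0 < ψ 1 := hpos 1 zero_le_one
    have hψ1lt : ψ 1 < 1 := by
      have h := hstrict (a := 0) (b := 1) ⟨le_refl 0, by rw [hone]; exact one_pos⟩
        ⟨zero_le_one, hψ1pos⟩ one_pos
      rwa [hone] at h
    have hinv1 : psiInv ψ 1 = 0 := psiInv_one hone
    have hinvψ1 : psiInv ψ (ψ 1) = 1 := by
      refine le_antisymm (inv_psi_le zero_le_one) ?_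
      refine le_csInf ⟨1, zero_le_one, le_refl _⟩ ?_
      rintro y ⟨hy0, hy⟩
      by_contra hlt
      push_neg at hlt
      have h := hstrict ⟨hy0, hpos y hy0⟩ ⟨zero_le_one, hψ1pos⟩ hlt
      exact absurd hy (not_le.mpr h)
    have e1 := hUV 0 ⟨le_refl 0, zero_le_one⟩ 1 ⟨zero_le_one, le_refl 1⟩
    rw [hinv0, hinv1, add_zero, hone] at e1
    have e2 := hUV (ψ 1) ⟨hψ1pos.le, hψ1lt.le⟩ 1 ⟨zero_le_one, le_refl 1⟩
    rw [hinvψ1, hinv1, add_zero] at e2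
    have hmono : ν {ω | U ω ≤ 0 ∧ V ω ≤ 1} ≤ ν {ω | U ω ≤ ψ 1 ∧ V ω ≤ 1} :=
      measure_mono (fun ω hω => ⟨le_trans hω.1 hψ1pos.le, hω.2⟩)
    have h := ENNReal.toReal_mono (measure_ne_top ν _) hmono
    rw [e1, e2] at h
    linarith

/-- Kendall's tau of a bivariate Archimedean copula `C` with (2-monotone) generator `ψ`:
if `R` has the radial distribution `F_R(x) = 1 - ψ(x) + x ψ₊'(x)` associated with `ψ`
and `(U, V) ~ C`, then `τ(C) = 4 E[C(U,V)] - 1 = 4 E[ψ(R)] - 1`. -/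
theorem stmt16 {Ω Ω' : Type*} [MeasurableSpace Ω] [MeasurableSpace Ω']
    (μ : Measure Ω) (ν : Measure Ω') [IsProbabilityMeasure μ] [IsProbabilityMeasure ν]
    (ψ : ℝ → ℝ) (hψ : IsArchGen ψ) (hconv : ConvexOn ℝ (Set.Ici 0) ψ)
    (R : Ω → ℝ) (hRm : Measurable R) (hR0 : ∀ ω, 0 ≤ R ω)
    (hR : ∀ x : ℝ, 0 ≤ x →
      (μ {ω | R ω ≤ x}).toReal = 1 - ψ x + x * derivWithin ψ (Set.Ici x) x)
    (U V : Ω' → ℝ) (hUm : Measurable U) (hVm : Measurable V)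
    (hUV : ∀ u ∈ Set.Icc (0:ℝ) 1, ∀ v ∈ Set.Icc (0:ℝ) 1,
      (ν {ω | U ω ≤ u ∧ V ω ≤ v}).toReal = ψ (psiInv ψ u + psiInv ψ v)) :
    4 * (∫ ω, ψ (psiInv ψ (U ω) + psiInv ψ (V ω)) ∂ν) - 1
      = 4 * (∫ ω, ψ (R ω) ∂μ) - 1 := by
  obtain ⟨hcont, hanti, hone, htend, hrange, hstrict⟩ := hψ
  have key := stmt16' μ ν ψ hcont hanti hone hrange hstrict R hRm hR0 hR U V hUm hVm hUV
  rw [key]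
end
end
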